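/- arXiv:1703.00793 — 4 statements merged into one kernel-verified Lean document; each statement's English description precedes it below -/
import Mathlib

section
/- Let R ≥ 0, and let B_R denote the open ball of radius R in ℝ³ centered at the origin. Let 1 ≤ p, q, r, r', q' ≤ ∞ satisfy 1 + 1/p = 1/r + 1/q = 1/r' + 1/q'. Then for measurable f, g on ℝ³, the convolution satisfies ‖f*g‖_{L^p(B_R^c)} ≤ 2(‖f‖_{L^r(B_{R/2}^c)}‖g‖_{L^q(ℝ³)} + ‖f‖_{L^{r'}(ℝ³)}‖g‖_{L^{q'}(B_{R/2}^c)}). -/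
open MeasureTheory Filter
open scoped ENNReal

noncomputable section

abbrev E3 := EuclideanSpace ℝ (Fin 3)

namespace YoungAux

variable {α : Type*} [MeasurableSpace α] {μ : Measure α}

/-- ENNReal-valued Lp functional. -/
def eL (F : α → ℝ≥0∞) (p : ℝ≥0∞) (μ : Measure α) : ℝ≥0∞ :=
  if p = ∞ then essSup F μ else (∫⁻ x, F x ^ p.toReal ∂μ) ^ (1 / p.toReal)

lemma eL_mono {F G : α → ℝ≥0∞} (p : ℝ≥0∞) (h : ∀ᵐ x ∂μ, F x ≤ G x) :
    eL F p μ ≤ eL G p μ := by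
  unfold eL
  split
  · exact essSup_mono_ae h
  · refine ENNReal.rpow_le_rpow ?_ (by positivity)
    exact lintegral_mono_ae (h.mono fun x hx => ENNReal.rpow_le_rpow hx ENNReal.toReal_nonneg)

lemma eL_restrict_le (F : α → ℝ≥0∞) (p : ℝ≥0∞) (S : Set α) :
    eL F p (μ.restrict S) ≤ eL F p μ := by
  unfold eL
  split
  · exact essSup_mono_measure (Measure.absolutelyContinuous_of_le Measure.restrict_le_self)
  · exact ENNReal.rpow_le_rpow (lintegral_mono' Measure.restrict_le_self le_rfl) (by positivity)

lemma eL_add_le {F G : α → ℝ≥0∞} {p : ℝ≥0∞} (hp : 1 ≤ p)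
    (hF : AEMeasurable F μ) (hG : AEMeasurable G μ) :
    eL (fun x => F x + G x) p μ ≤ eL F p μ + eL G p μ := by
  unfold eL
  split
  · refine essSup_le_of_ae_le _ ?_
    filter_upwards [ENNReal.ae_le_essSup F (μ := μ), ENNReal.ae_le_essSup G (μ := μ)] with x h1 h2
    exact add_le_add h1 h2
  · rename_i hptop
    have h1 : (1 : ℝ) ≤ p.toReal := by
      rw [← ENNReal.toReal_one]
      exact ENNReal.toReal_mono hptop hp
    exact ENNReal.lintegral_Lp_add_le hF hG h1

lemma eLpNorm_eq_eL (f : α → ℝ) {p : ℝ≥0∞} (hp : p ≠ 0) :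
    eLpNorm f p μ = eL (fun x => (‖f x‖₊ : ℝ≥0∞)) p μ := by
  unfold eL
  by_cases hptop : p = ∞
  · simp [hptop, eLpNorm, eLpNormEssSup]; rfl
  · rw [eLpNorm_eq_eLpNorm' hp hptop, eLpNorm', if_neg hptop]; rfl

lemma eL_indicator_le {F : α → ℝ≥0∞} {A : Set α} (hA : MeasurableSet A) {p : ℝ≥0∞}
    (hp : p ≠ 0) :
    eL (A.indicator F) p μ ≤ eL F p (μ.restrict A) := by
  unfold eL
  split
  · rw [ENNReal.essSup_indicator_eq_essSup_restrict hA]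
  · rename_i hptop
    have hpt : 0 < p.toReal := ENNReal.toReal_pos hp hptop
    rw [← lintegral_indicator hA]
    refine ENNReal.rpow_le_rpow (lintegral_mono fun x => ?_) (by positivity)
    by_cases hx : x ∈ A
    · simp [hx]
    · simp [hx, Set.indicator_of_notMem hx, ENNReal.zero_rpow_of_pos hpt]

end YoungAux

namespace YoungAux

variable {α : Type*} [MeasurableSpace α] {μ : Measure α}

lemma holder {A B : α → ℝ≥0∞} (hA : AEMeasurable A μ) (hB : AEMeasurable B μ)
    {r q : ℝ≥0∞} (hr : 1 ≤ r) (hq : 1 ≤ q) (hrq : 1/r + 1/q = 1) :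
    ∫⁻ x, A x * B x ∂μ ≤ eL A r μ * eL B q μ := by
  have hr0 : r ≠ 0 := by intro h; rw [h] at hr; simp at hr
  have hq0 : q ≠ 0 := by intro h; rw [h] at hq; simp at hq
  by_cases hrtop : r = ∞
  · have hq1 : q = 1 := by
      rw [hrtop] at hrq; simp at hrq
      exact hrq
    have : ∫⁻ x, A x * B x ∂μ ≤ ∫⁻ x, essSup A μ * B x ∂μ := by
      refine lintegral_mono_ae ?_
      filter_upwards [ENNReal.ae_le_essSup A (μ := μ)] with x hx
      exact mul_le_mul_left hx _
    refine this.trans ?_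
    rw [lintegral_const_mul'' _ hB]
    simp [eL, hrtop, hq1]
  by_cases hqtop : q = ∞
  · have hr1 : r = 1 := by
      rw [hqtop] at hrq; simp at hrq
      exact hrq
    have : ∫⁻ x, A x * B x ∂μ ≤ ∫⁻ x, A x * essSup B μ ∂μ := by
      refine lintegral_mono_ae ?_
      filter_upwards [ENNReal.ae_le_essSup B (μ := μ)] with x hx
      exact mul_le_mul_right hx _
    refine this.trans ?_
    rw [lintegral_mul_const'' _ hA]
    simp [eL, hqtop, hr1]
  · -- both finite
    have hrne1 : r ≠ 1 := by
      intro h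
      rw [h] at hrq; simp at hrq
      have : q⁻¹ = (0 : ℝ≥0∞) := by
        have h2 : (1:ℝ≥0∞) + q⁻¹ = 1 + 0 := by simpa using hrq
        exact (ENNReal.add_right_inj (by simp)).1 h2
      exact hqtop (ENNReal.inv_eq_zero.1 this)
    have h1r : 1 < r.toReal := by
      rw [← ENNReal.toReal_one]
      exact ENNReal.toReal_strict_mono hrtop (lt_of_le_of_ne hr (Ne.symm hrne1))
    have hsum : 1 / r.toReal + 1 / q.toReal = 1 := by
      have := congrArg ENNReal.toReal hrq
      rwa [ENNReal.toReal_add (by simp [hr0]) (by simp [hq0]), ENNReal.toReal_div,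
        ENNReal.toReal_div, ENNReal.toReal_one] at this
    have := ENNReal.lintegral_mul_le_Lp_mul_Lq μ (Real.holderConjugate_iff.mpr ⟨h1r, by rw [one_div, one_div] at hsum; exact hsum⟩) hA hB
    simp only [Pi.mul_apply] at this
    simpa [eL, hrtop, hqtop] using this

end YoungAux

namespace YoungAux

lemma lint_sub_left (F : E3 → ℝ≥0∞) (hF : Measurable F) (x : E3) :
    ∫⁻ y, F (x - y) = ∫⁻ y, F y := by
  have h0 : (volume : Measure E3) = Measure.map Neg.neg volume :=
    (Measure.map_neg_eq_self (volume : Measure E3)).symm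
  have h1 : ∫⁻ y, F (x - y) = ∫⁻ y, F (x + y) := by
    conv_lhs => rw [h0]
    rw [lintegral_map (f := fun y => F (x - y)) (hF.comp (measurable_const.sub measurable_id))
      measurable_neg]
    simp [sub_eq_add_neg]
  rw [h1, lintegral_add_left_eq_self]

lemma map_sub_left_volume (x : E3) :
    Measure.map (fun y => x - y) (volume : Measure E3) = volume := by
  have : (fun y : E3 => x - y) = (fun y : E3 => x + y) ∘ Neg.neg := by
    funext y; simp [sub_eq_add_neg]
  rw [this, ← Measure.map_map (measurable_const_add x) measurable_neg,
    Measure.map_neg_eq_self, map_add_left_eq_self]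

lemma eL_translate (F : E3 → ℝ≥0∞) (hF : Measurable F) (x : E3) (r : ℝ≥0∞) :
    eL (fun y => F (x - y)) r volume = eL F r volume := by
  unfold eL
  split
  · have := essSup_map_measure_of_measurable (μ := (volume : Measure E3))
      (g := F) (f := fun y => x - y) hF (measurable_const.sub measurable_id).aemeasurable
    rw [map_sub_left_volume] at this
    rw [this]; rfl
  · rw [lint_sub_left (fun z => F z ^ r.toReal) (hF.pow_const _) x]

lemma young {p q r : ℝ≥0∞} (hp : 1 ≤ p) (hq : 1 ≤ q) (hr : 1 ≤ r)
    (h : 1 + 1/p = 1/r + 1/q) (F G : E3 → ℝ≥0∞) (hF : Measurable F) (hG : Measurable G) :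
    eL (fun x => ∫⁻ y, F (x - y) * G y) p volume ≤ eL F r volume * eL G q volume := by
  have hp0 : p ≠ 0 := by intro e; rw [e] at hp; simp at hp
  have hq0 : q ≠ 0 := by intro e; rw [e] at hq; simp at hq
  have hr0 : r ≠ 0 := by intro e; rw [e] at hr; simp at hr
  by_cases hptop : p = ∞
  · -- p = ∞
    have hrq : 1/r + 1/q = 1 := by rw [← h, hptop]; simp
    have key : ∀ x : E3, ∫⁻ y, F (x - y) * G y ≤ eL F r volume * eL G q volume := by
      intro x
      have := holder (μ := (volume : Measure E3))
        (A := fun y => F (x - y)) (B := G)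
        ((hF.comp (measurable_const.sub measurable_id)).aemeasurable) hG.aemeasurable
        hr hq hrq
      rwa [eL_translate F hF x r] at this
    rw [eL, if_pos hptop]
    exact essSup_le_of_ae_le _ (Filter.Eventually.of_forall key)
  · -- p < ∞
    have h1p : (0:ℝ≥0∞) < 1/p := by
      simp only [one_div, ENNReal.inv_pos]; exact hptop
    have hlt : (1:ℝ≥0∞) < 1/r + 1/q := by
      rw [← h]; exact ENNReal.lt_add_right ENNReal.one_ne_top (by simpa using h1p.ne')
    have hrtop : r ≠ ∞ := by
      intro e
      rw [e] at hlt; simp [one_div] at hlt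
      exact absurd hlt (not_lt.2 hq)
    have hqtop : q ≠ ∞ := by
      intro e
      rw [e] at hlt; simp [one_div] at hlt
      exact absurd hlt (not_lt.2 hr)
    set pt := p.toReal with hpt
    set rt := r.toReal with hrt
    set qt := q.toReal with hqt
    have hpt1 : 1 ≤ pt := by rw [hpt, ← ENNReal.toReal_one]; exact ENNReal.toReal_mono hptop hp
    have hrt1 : 1 ≤ rt := by rw [hrt, ← ENNReal.toReal_one]; exact ENNReal.toReal_mono hrtop hr
    have hqt1 : 1 ≤ qt := by rw [hqt, ← ENNReal.toReal_one]; exact ENNReal.toReal_mono hqtop hq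
    have hpt0 : 0 < pt := lt_of_lt_of_le one_pos hpt1
    have hrt0 : 0 < rt := lt_of_lt_of_le one_pos hrt1
    have hqt0 : 0 < qt := lt_of_lt_of_le one_pos hqt1
    have hreal : 1 + 1/pt = 1/rt + 1/qt := by
      have := congrArg ENNReal.toReal h
      rwa [ENNReal.toReal_add ENNReal.one_ne_top (by simp [hp0]),
        ENNReal.toReal_add (by simp [hr0]) (by simp [hq0]),
        ENNReal.toReal_div, ENNReal.toReal_div, ENNReal.toReal_div, ENNReal.toReal_one] at this
    set a := 1/pt with ha_def
    set b := 1 - 1/qt with hb_def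
    set c := 1 - 1/rt with hc_def
    have ha : 0 ≤ a := by positivity
    have hb : 0 ≤ b := by
      rw [hb_def]; rw [sub_nonneg]
      rw [div_le_one hqt0]; linarith
    have hc : 0 ≤ c := by
      rw [hc_def]; rw [sub_nonneg]
      rw [div_le_one hrt0]; linarith
    have hab : a + b = 1/rt := by
      rw [ha_def, hb_def]; linarith
    have hac : a + c = 1/qt := by
      rw [ha_def, hc_def]; linarith
    have hrab : rt * (a + b) = 1 := by
      rw [hab]; field_simp
    have hqac : qt * (a + c) = 1 := by
      rw [hac]; field_simp
    -- pointwise identity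
    have hid : ∀ u v : ℝ≥0∞, u * v = (u^rt * v^qt)^a * ((u^rt)^b * (v^qt)^c) := by
      intro u v
      rw [ENNReal.mul_rpow_of_nonneg _ _ ha]
      have e1 : (u^rt)^a * (u^rt)^b = u := by
        rw [← ENNReal.rpow_add_of_nonneg _ _ ha hb, ← ENNReal.rpow_mul, hrab, ENNReal.rpow_one]
      have e2 : (v^qt)^a * (v^qt)^c = v := by
        rw [← ENNReal.rpow_add_of_nonneg _ _ ha hc, ← ENNReal.rpow_mul, hqac, ENNReal.rpow_one]
      calc u * v = ((u^rt)^a * (u^rt)^b) * ((v^qt)^a * (v^qt)^c) := by rw [e1, e2]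
        _ = (u^rt)^a * (v^qt)^a * ((u^rt)^b * (v^qt)^c) := by ring
    set IF := ∫⁻ z, F z ^ rt with hIF
    set IG := ∫⁻ z, G z ^ qt with hIG
    set K := fun x : E3 => ∫⁻ y, F (x - y) ^ rt * G y ^ qt with hK
    have hKmeas : Measurable K := by
      rw [hK]
      exact Measurable.lintegral_prod_right
        (((hF.comp (measurable_fst.sub measurable_snd)).pow_const _).mul
          ((hG.comp measurable_snd).pow_const _))
    -- Step 1: pointwise Hölder
    have step1 : ∀ x : E3, (∫⁻ y, F (x - y) * G y) ≤ K x ^ a * (IF ^ b * IG ^ c) := by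
      intro x
      have hmeas0 : AEMeasurable (fun y => F (x - y) ^ rt * G y ^ qt) (volume : Measure E3) :=
        (((hF.comp (measurable_const.sub measurable_id)).pow_const _).mul
          (hG.pow_const _)).aemeasurable
      have hmeas1 : AEMeasurable (fun y : E3 => F (x - y) ^ rt) (volume : Measure E3) :=
        ((hF.comp (measurable_const.sub measurable_id)).pow_const _).aemeasurable
      have hmeas2 : AEMeasurable (fun y : E3 => G y ^ qt) (volume : Measure E3) :=
        (hG.pow_const _).aemeasurable
      have h3 := ENNReal.lintegral_prod_norm_pow_le (μ := (volume : Measure E3))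
        (Finset.univ : Finset (Fin 3))
        (f := ![fun y => F (x - y) ^ rt * G y ^ qt, fun y => F (x - y) ^ rt, fun y => G y ^ qt])
        (p := ![a, b, c]) ?_ ?_ ?_
      · have lhs_eq : ∫⁻ (y : E3), ∏ i : Fin 3,
            ![fun y => F (x - y) ^ rt * G y ^ qt, fun y => F (x - y) ^ rt,
              fun y => G y ^ qt] i y ^ ![a, b, c] i = ∫⁻ y, F (x - y) * G y := by
          congr 1; funext y
          simp only [Fin.prod_univ_three]
          simp only [Matrix.cons_val_zero, Matrix.cons_val_one, Matrix.head_cons,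
            Matrix.cons_val_two, Matrix.tail_cons]
          rw [hid (F (x - y)) (G y), ← mul_assoc]
        rw [lhs_eq] at h3
        refine h3.trans ?_
        have e1 : ∫⁻ y, F (x - y) ^ rt = IF := lint_sub_left _ (hF.pow_const _) x
        simp only [Fin.prod_univ_three]
        simp only [Matrix.cons_val_zero, Matrix.cons_val_one, Matrix.head_cons,
          Matrix.cons_val_two, Matrix.tail_cons]
        rw [e1]
        rw [mul_assoc]
      · intro i _
        fin_cases i
        · simpa using hmeas0
        · simpa using hmeas1
        · simpa using hmeas2
      · simp [Fin.sum_univ_three]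
        rw [ha_def, hb_def, hc_def]; linarith
      · intro i _
        fin_cases i <;> simp [ha, hb, hc]
    -- Step 2: Tonelli
    have swap : ∫⁻ x, K x = IF * IG := by
      rw [hK]
      rw [lintegral_lintegral_swap
        ((((hF.comp (measurable_fst.sub measurable_snd)).pow_const _).mul
          ((hG.comp measurable_snd).pow_const _)).aemeasurable)]
      have inner : ∀ y : E3, ∫⁻ x, F (x - y) ^ rt * G y ^ qt = IF * G y ^ qt := by
        intro y
        have hm : Measurable (fun x : E3 => F (x - y) ^ rt) :=
          ((hF.comp (measurable_id.sub measurable_const) :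
            Measurable fun x : E3 => F (x - y))).pow_const _
        rw [lintegral_mul_const _ hm, lintegral_sub_right_eq_self (fun z => F z ^ rt) y]
      calc ∫⁻ y, ∫⁻ x, F (x - y) ^ rt * G y ^ qt = ∫⁻ y, IF * G y ^ qt := by
            congr 1; funext y; exact inner y
        _ = IF * IG := lintegral_const_mul _ (hG.pow_const _)
    have hapt : a * pt = 1 := by rw [ha_def]; field_simp
    set C := (IF ^ b * IG ^ c) ^ pt with hC
    have step2 : ∫⁻ x, (∫⁻ y, F (x - y) * G y) ^ pt ≤ IF ^ (pt/rt) * IG ^ (pt/qt) := by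
      have hbound : ∀ x, (∫⁻ y, F (x - y) * G y) ^ pt ≤ K x * C := by
        intro x
        calc (∫⁻ y, F (x - y) * G y) ^ pt ≤ (K x ^ a * (IF ^ b * IG ^ c)) ^ pt :=
              ENNReal.rpow_le_rpow (step1 x) hpt0.le
          _ = K x * C := by
              rw [ENNReal.mul_rpow_of_nonneg _ _ hpt0.le, ← ENNReal.rpow_mul, hapt,
                ENNReal.rpow_one]
      calc ∫⁻ x, (∫⁻ y, F (x - y) * G y) ^ pt ≤ ∫⁻ x, K x * C := lintegral_mono hbound
        _ = (∫⁻ x, K x) * C := lintegral_mul_const _ hKmeas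
        _ = IF * IG * (IF ^ b * IG ^ c) ^ pt := by rw [swap, hC]
        _ = IF ^ (pt/rt) * IG ^ (pt/qt) := by
            rw [ENNReal.mul_rpow_of_nonneg _ _ hpt0.le, ← ENNReal.rpow_mul, ← ENNReal.rpow_mul]
            have eF : pt / rt = 1 + b * pt := by
              have : rt * (a + b) = 1 := hrab
              field_simp
              nlinarith [hrab, hapt]
            have eG : pt / qt = 1 + c * pt := by
              field_simp
              nlinarith [hqac, hapt]
            rw [eF, eG, ENNReal.rpow_add_of_nonneg _ _ zero_le_one (by positivity),
              ENNReal.rpow_add_of_nonneg _ _ zero_le_one (by positivity),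
              ENNReal.rpow_one, ENNReal.rpow_one]
            ring
    have goal_eq : eL (fun x => ∫⁻ y, F (x - y) * G y) p volume
        = (∫⁻ x, (∫⁻ y, F (x - y) * G y) ^ pt) ^ (1/pt) := by
      rw [eL, if_neg hptop]
    rw [goal_eq, eL, if_neg hrtop, eL, if_neg hqtop]
    calc (∫⁻ x, (∫⁻ y, F (x - y) * G y) ^ pt) ^ (1/pt)
        ≤ (IF ^ (pt/rt) * IG ^ (pt/qt)) ^ (1/pt) :=
          ENNReal.rpow_le_rpow step2 (by positivity)
      _ = IF ^ (1/rt) * IG ^ (1/qt) := by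
          rw [ENNReal.mul_rpow_of_nonneg _ _ (by positivity), ← ENNReal.rpow_mul,
            ← ENNReal.rpow_mul]
          congr 1
          · congr 1
            field_simp
          · congr 1
            field_simp

end YoungAux

open YoungAux in
theorem stmt_0 (R : ℝ) (hR : 0 ≤ R) (p q r r' q' : ℝ≥0∞)
    (hp : 1 ≤ p) (hq : 1 ≤ q) (hr : 1 ≤ r) (hr' : 1 ≤ r') (hq' : 1 ≤ q')
    (h1 : 1 + 1/p = 1/r + 1/q) (h2 : 1 + 1/p = 1/r' + 1/q')
    (f g : E3 → ℝ) (hf : Measurable f) (hg : Measurable g) :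
    eLpNorm (fun x => ∫ y, f (x - y) * g y) p
        (volume.restrict {x : E3 | R ≤ ‖x‖}) ≤
      2 * (eLpNorm f r (volume.restrict {x : E3 | R / 2 ≤ ‖x‖}) * eLpNorm g q volume
        + eLpNorm f r' volume * eLpNorm g q' (volume.restrict {x : E3 | R / 2 ≤ ‖x‖})) := by
  classical
  have hp0 : p ≠ 0 := (zero_lt_one.trans_le hp).ne'
  have hq0 : q ≠ 0 := (zero_lt_one.trans_le hq).ne'
  have hr0 : r ≠ 0 := (zero_lt_one.trans_le hr).ne'
  have hr'0 : r' ≠ 0 := (zero_lt_one.trans_le hr').ne'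
  have hq'0 : q' ≠ 0 := (zero_lt_one.trans_le hq').ne'
  set S : Set E3 := {x : E3 | R ≤ ‖x‖} with hS_def
  set A : Set E3 := {x : E3 | R / 2 ≤ ‖x‖} with hA_def
  have hS : MeasurableSet S := (isClosed_le continuous_const continuous_norm).measurableSet
  have hA : MeasurableSet A := (isClosed_le continuous_const continuous_norm).measurableSet
  set F : E3 → ℝ≥0∞ := fun z => (‖f z‖₊ : ℝ≥0∞) with hF_def
  set G : E3 → ℝ≥0∞ := fun z => (‖g z‖₊ : ℝ≥0∞) with hG_def
  have hFm : Measurable F := hf.nnnorm.coe_nnreal_ennreal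
  have hGm : Measurable G := hg.nnnorm.coe_nnreal_ennreal
  set F1 : E3 → ℝ≥0∞ := A.indicator F with hF1_def
  set F2 : E3 → ℝ≥0∞ := Aᶜ.indicator F with hF2_def
  set G2 : E3 → ℝ≥0∞ := A.indicator G with hG2_def
  have hF1m : Measurable F1 := hFm.indicator hA
  have hF2m : Measurable F2 := hFm.indicator hA.compl
  have hG2m : Measurable G2 := hGm.indicator hA
  set T1 : E3 → ℝ≥0∞ := fun x => ∫⁻ y, F1 (x - y) * G y with hT1_def
  set T2 : E3 → ℝ≥0∞ := fun x => ∫⁻ y, F2 (x - y) * G2 y with hT2_def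
  have hT1m : Measurable T1 :=
    Measurable.lintegral_prod_right
      ((hF1m.comp (measurable_fst.sub measurable_snd)).mul (hGm.comp measurable_snd))
  have hT2m : Measurable T2 :=
    Measurable.lintegral_prod_right
      ((hF2m.comp (measurable_fst.sub measurable_snd)).mul (hG2m.comp measurable_snd))
  have key : ∀ x ∈ S, ((‖∫ y, f (x - y) * g y‖₊ : ℝ≥0∞)) ≤ T1 x + T2 x := by
    intro x hx
    have hx' : R ≤ ‖x‖ := hx
    calc ((‖∫ y, f (x - y) * g y‖₊ : ℝ≥0∞))
        ≤ ∫⁻ y, (‖f (x - y) * g y‖₊ : ℝ≥0∞) := enorm_integral_le_lintegral_enorm _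
      _ = ∫⁻ y, F (x - y) * G y := by
          congr 1; funext y; rw [nnnorm_mul]; push_cast; rfl
      _ = ∫⁻ y, (F1 (x - y) * G y + F2 (x - y) * G2 y) := by
          congr 1; funext y
          have hsplit : F (x - y) = F1 (x - y) + F2 (x - y) := by
            by_cases hxy : (x - y) ∈ A
            · simp [hF1_def, hF2_def, hxy]
            · simp [hF1_def, hF2_def, hxy]
          rw [hsplit, add_mul]
          congr 1
          by_cases hy : y ∈ A
          · simp [hG2_def, hy]
          · have hy' : ‖y‖ < R / 2 := by
              simpa [hA_def, not_le] using hy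
            have hxy : (x - y) ∈ A := by
              simp only [hA_def, Set.mem_setOf_eq]
              have h3 : ‖x‖ - ‖y‖ ≤ ‖x - y‖ := norm_sub_norm_le x y
              linarith
            simp [hF2_def, hG2_def, hy, hxy]
      _ = T1 x + T2 x := by
          have hm1 : Measurable (fun y : E3 => F1 (x - y) * G y) :=
            ((hF1m.comp (measurable_const.sub measurable_id) :
              Measurable fun y : E3 => F1 (x - y))).mul hGm
          rw [lintegral_add_left hm1]
  have step : eLpNorm (fun x => ∫ y, f (x - y) * g y) p (volume.restrict S)
      ≤ eLpNorm f r (volume.restrict A) * eLpNorm g q volume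
        + eLpNorm f r' volume * eLpNorm g q' (volume.restrict A) := by
    calc eLpNorm (fun x => ∫ y, f (x - y) * g y) p (volume.restrict S)
        = eL (fun x => ((‖∫ y, f (x - y) * g y‖₊ : ℝ≥0∞))) p (volume.restrict S) :=
          eLpNorm_eq_eL _ hp0
      _ ≤ eL (fun x => T1 x + T2 x) p (volume.restrict S) :=
          eL_mono p ((ae_restrict_iff' hS).2 (Filter.Eventually.of_forall key))
      _ ≤ eL T1 p (volume.restrict S) + eL T2 p (volume.restrict S) :=
          eL_add_le hp hT1m.aemeasurable hT2m.aemeasurable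
      _ ≤ eL T1 p volume + eL T2 p volume :=
          add_le_add (eL_restrict_le _ _ _) (eL_restrict_le _ _ _)
      _ ≤ eL F1 r volume * eL G q volume + eL F2 r' volume * eL G2 q' volume :=
          add_le_add (young hp hq hr h1 F1 G hF1m hGm) (young hp hq' hr' h2 F2 G2 hF2m hG2m)
      _ ≤ eLpNorm f r (volume.restrict A) * eLpNorm g q volume
          + eLpNorm f r' volume * eLpNorm g q' (volume.restrict A) := by
          refine add_le_add (mul_le_mul' ?_ ?_) (mul_le_mul' ?_ ?_)
          · rw [eLpNorm_eq_eL f hr0]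
            exact eL_indicator_le hA hr0
          · rw [eLpNorm_eq_eL g hq0]
          · rw [eLpNorm_eq_eL f hr'0]
            exact eL_mono _ (Filter.Eventually.of_forall fun x =>
              Set.indicator_le_self _ _ x)
          · rw [eLpNorm_eq_eL g hq'0]
            exact eL_indicator_le hA hq'0
  refine step.trans ?_
  exact le_mul_of_one_le_left zero_le one_le_two
end
end

section
/- Let f ∈ L¹(ℝⁿ) and define V(x) = −x ∫₀¹ f(x/λ) λ^{−(n+1)} dλ. Then for every R ≥ 0, ∫_{|x|≤R} |V(x)| dx ≤ R ∫_{ℝⁿ} |f(x)| dx. -/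
open MeasureTheory Filter
open scoped ENNReal

noncomputable section

private lemma ofReal_norm_eq_coe_nnnorm {E : Type*} [SeminormedAddCommGroup E] (a : E) :
    ENNReal.ofReal ‖a‖ = (‖a‖₊ : ℝ≥0∞) := ENNReal.ofReal_eq_coe_nnreal _

private lemma ofReal_integral_norm_eq_lintegral_nnnorm {α : Type*} [MeasurableSpace α]
    {μ : Measure α} {P : Type*} [NormedAddCommGroup P] {f : α → P} (hf : Integrable f μ) :
    ENNReal.ofReal (∫ x, ‖f x‖ ∂μ) = ∫⁻ x, (‖f x‖₊ : ℝ≥0∞) ∂μ :=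
  ofReal_integral_norm_eq_lintegral_enorm hf

private lemma DZ_pointwise (n : ℕ) (f : EuclideanSpace ℝ (Fin n) → ℝ)
    (x : EuclideanSpace ℝ (Fin n)) :
    (‖-(∫ l in Set.Ioo (0 : ℝ) 1, f (l⁻¹ • x) / l ^ (n + 1)) • x‖₊ : ℝ≥0∞) ≤
      ∫⁻ l in Set.Ioo (0:ℝ) 1,
        (‖x‖₊ : ℝ≥0∞) * ((‖f (l⁻¹ • x)‖₊ : ℝ≥0∞) * (ENNReal.ofReal (l^(n+1)))⁻¹) := by
  rw [nnnorm_smul, nnnorm_neg, ENNReal.coe_mul]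
  calc (‖∫ l in Set.Ioo (0 : ℝ) 1, f (l⁻¹ • x) / l ^ (n + 1)‖₊ : ℝ≥0∞) * ‖x‖₊
      ≤ (∫⁻ l in Set.Ioo (0:ℝ) 1, (‖f (l⁻¹ • x) / l ^ (n + 1)‖₊ : ℝ≥0∞)) * ‖x‖₊ := by
        gcongr
        exact enorm_integral_le_lintegral_enorm _
    _ = ∫⁻ l in Set.Ioo (0:ℝ) 1,
        (‖x‖₊ : ℝ≥0∞) * ((‖f (l⁻¹ • x)‖₊ : ℝ≥0∞) * (ENNReal.ofReal (l^(n+1)))⁻¹) := by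
        rw [← lintegral_mul_const' _ _ ENNReal.coe_ne_top]
        refine lintegral_congr_ae ?_
        filter_upwards [ae_restrict_mem measurableSet_Ioo] with l hl
        have hb : (0:ℝ) < l^(n+1) := pow_pos hl.1 _
        rw [← ofReal_norm_eq_coe_nnnorm (f (l⁻¹ • x) / l ^ (n + 1)), norm_div,
          Real.norm_of_nonneg hb.le, ENNReal.ofReal_div_of_pos hb,
          ofReal_norm_eq_coe_nnnorm, div_eq_mul_inv]
        ring

private lemma DZ_cov (n : ℕ) (g : EuclideanSpace ℝ (Fin n) → ℝ) (hg : Measurable g) (R : ℝ)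
    (l : ℝ) (hl : l ∈ Set.Ioo (0:ℝ) 1) :
    ∫⁻ x in {x : EuclideanSpace ℝ (Fin n) | ‖x‖ ≤ R},
        (‖x‖₊ : ℝ≥0∞) * ((‖g (l⁻¹ • x)‖₊ : ℝ≥0∞) * (ENNReal.ofReal (l^(n+1)))⁻¹)
      = ∫⁻ y in {y : EuclideanSpace ℝ (Fin n) | l * ‖y‖ ≤ R}, (‖y‖₊ : ℝ≥0∞) * ‖g y‖₊ := by
  have hl0 : (0:ℝ) < l := hl.1
  have hfr : Module.finrank ℝ (EuclideanSpace ℝ (Fin n)) = n := finrank_euclideanSpace_fin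
  have hSm : MeasurableSet {x : EuclideanSpace ℝ (Fin n) | ‖x‖ ≤ R} :=
    measurableSet_le (by fun_prop) measurable_const
  have hTm : MeasurableSet {y : EuclideanSpace ℝ (Fin n) | l * ‖y‖ ≤ R} :=
    measurableSet_le (by fun_prop) measurable_const
  have hb : (0:ℝ) < l^(n+1) := pow_pos hl0 _
  have hcne : (ENNReal.ofReal (l^(n+1)))⁻¹ ≠ ⊤ :=
    ENNReal.inv_ne_top.mpr (ENNReal.ofReal_pos.2 hb).ne'
  have e1 : ∫⁻ x in {x : EuclideanSpace ℝ (Fin n) | ‖x‖ ≤ R},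
        (‖x‖₊ : ℝ≥0∞) * ((‖g (l⁻¹ • x)‖₊ : ℝ≥0∞) * (ENNReal.ofReal (l^(n+1)))⁻¹)
      = (ENNReal.ofReal (l^(n+1)))⁻¹ *
        ∫⁻ x in {x : EuclideanSpace ℝ (Fin n) | ‖x‖ ≤ R},
          (‖x‖₊ : ℝ≥0∞) * (‖g (l⁻¹ • x)‖₊ : ℝ≥0∞) := by
    rw [← lintegral_const_mul' _ _ hcne]
    congr 1; ext x; ring
  rw [e1]
  set Ψ : EuclideanSpace ℝ (Fin n) → ℝ≥0∞ := fun y =>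
    ({y : EuclideanSpace ℝ (Fin n) | l * ‖y‖ ≤ R}).indicator
      (fun y => ENNReal.ofReal l * ((‖y‖₊ : ℝ≥0∞) * ‖g y‖₊)) y with hΨ
  have hΨm : Measurable Ψ := Measurable.indicator (by fun_prop) hTm
  have key : ∀ x : EuclideanSpace ℝ (Fin n),
      ({x : EuclideanSpace ℝ (Fin n) | ‖x‖ ≤ R}).indicator
        (fun x => (‖x‖₊ : ℝ≥0∞) * (‖g (l⁻¹ • x)‖₊ : ℝ≥0∞)) x = Ψ (l⁻¹ • x) := by
    intro x
    simp only [hΨ]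
    have hmem : (l⁻¹ • x ∈ {y : EuclideanSpace ℝ (Fin n) | l * ‖y‖ ≤ R}) ↔
        (x ∈ {x : EuclideanSpace ℝ (Fin n) | ‖x‖ ≤ R}) := by
      simp only [Set.mem_setOf_eq, norm_smul, Real.norm_of_nonneg (inv_nonneg.2 hl0.le),
        ← mul_assoc, mul_inv_cancel₀ hl0.ne', one_mul]
    by_cases hxS : x ∈ {x : EuclideanSpace ℝ (Fin n) | ‖x‖ ≤ R}
    · rw [Set.indicator_of_mem hxS, Set.indicator_of_mem (hmem.2 hxS)]
      have : (‖l⁻¹ • x‖₊ : ℝ≥0∞) = (ENNReal.ofReal l)⁻¹ * ‖x‖₊ := by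
        rw [← ofReal_norm_eq_coe_nnnorm, norm_smul, Real.norm_of_nonneg (inv_nonneg.2 hl0.le),
          ENNReal.ofReal_mul (inv_nonneg.2 hl0.le), ofReal_norm_eq_coe_nnnorm,
          ENNReal.ofReal_inv_of_pos hl0]
      rw [this]
      have hne : ENNReal.ofReal l ≠ 0 := (ENNReal.ofReal_pos.2 hl0).ne'
      rw [← mul_assoc, ← mul_assoc, ENNReal.mul_inv_cancel hne ENNReal.ofReal_ne_top, one_mul]
    · rw [Set.indicator_of_notMem hxS, Set.indicator_of_notMem (fun h => hxS (hmem.1 h))]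
  have e2 : ∫⁻ x in {x : EuclideanSpace ℝ (Fin n) | ‖x‖ ≤ R},
        (‖x‖₊ : ℝ≥0∞) * (‖g (l⁻¹ • x)‖₊ : ℝ≥0∞)
      = ∫⁻ x, Ψ (l⁻¹ • x) := by
    rw [← lintegral_indicator hSm]
    exact lintegral_congr key
  rw [e2]
  have e3 : ∫⁻ x, Ψ (l⁻¹ • x) = ENNReal.ofReal (l ^ n) * ∫⁻ y, Ψ y := by
    rw [← lintegral_map hΨm (measurable_const_smul l⁻¹),
      Measure.map_addHaar_smul volume (inv_ne_zero hl0.ne'), lintegral_smul_measure, smul_eq_mul, hfr,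
      inv_pow, inv_inv, abs_of_pos (pow_pos hl0 n)]
  have hmul : ENNReal.ofReal (l ^ n) * ENNReal.ofReal l = ENNReal.ofReal (l ^ (n+1)) := by
    rw [← ENNReal.ofReal_mul (pow_nonneg hl0.le n), ← pow_succ]
  rw [e3, hΨ, lintegral_indicator hTm, lintegral_const_mul' _ _ ENNReal.ofReal_ne_top,
    ← mul_assoc, mul_assoc, ← mul_assoc (ENNReal.ofReal (l ^ n)), hmul, ← mul_assoc,
    ENNReal.inv_mul_cancel (ENNReal.ofReal_pos.2 hb).ne' ENNReal.ofReal_ne_top, one_mul]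

private lemma DZ_outer (n : ℕ) (g : EuclideanSpace ℝ (Fin n) → ℝ) (hg : Measurable g)
    (R : ℝ) (hR : 0 ≤ R) :
    ∫⁻ l in Set.Ioo (0:ℝ) 1, ∫⁻ y in {y : EuclideanSpace ℝ (Fin n) | l * ‖y‖ ≤ R},
        (‖y‖₊ : ℝ≥0∞) * ‖g y‖₊
      ≤ ENNReal.ofReal R * ∫⁻ y, (‖g y‖₊ : ℝ≥0∞) := by
  set Θ : ℝ → EuclideanSpace ℝ (Fin n) → ℝ≥0∞ := fun l y =>
    ({p : ℝ × EuclideanSpace ℝ (Fin n) | p.1 * ‖p.2‖ ≤ R}).indicator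
      (fun p => (‖p.2‖₊ : ℝ≥0∞) * ‖g p.2‖₊) (l, y) with hΘ
  have hPm : MeasurableSet {p : ℝ × EuclideanSpace ℝ (Fin n) | p.1 * ‖p.2‖ ≤ R} :=
    measurableSet_le (by fun_prop) measurable_const
  have hΘm : AEMeasurable (Function.uncurry Θ)
      (((volume : Measure ℝ).restrict (Set.Ioo 0 1)).prod volume) := by
    refine Measurable.aemeasurable ?_
    have : Function.uncurry Θ = fun p : ℝ × EuclideanSpace ℝ (Fin n) =>
        ({p : ℝ × EuclideanSpace ℝ (Fin n) | p.1 * ‖p.2‖ ≤ R}).indicator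
          (fun p => (‖p.2‖₊ : ℝ≥0∞) * ‖g p.2‖₊) p := rfl
    rw [this]
    exact Measurable.indicator (by fun_prop) hPm
  have e1 : ∀ l : ℝ, ∫⁻ y in {y : EuclideanSpace ℝ (Fin n) | l * ‖y‖ ≤ R},
      (‖y‖₊ : ℝ≥0∞) * ‖g y‖₊ = ∫⁻ y, Θ l y := by
    intro l
    have hTm : MeasurableSet {y : EuclideanSpace ℝ (Fin n) | l * ‖y‖ ≤ R} :=
      measurableSet_le (by fun_prop) measurable_const
    rw [← lintegral_indicator hTm]
    refine lintegral_congr fun y => ?_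
    simp only [hΘ, Set.indicator_apply, Set.mem_setOf_eq]
  calc ∫⁻ l in Set.Ioo (0:ℝ) 1, ∫⁻ y in {y : EuclideanSpace ℝ (Fin n) | l * ‖y‖ ≤ R},
        (‖y‖₊ : ℝ≥0∞) * ‖g y‖₊
      = ∫⁻ l in Set.Ioo (0:ℝ) 1, ∫⁻ y, Θ l y := lintegral_congr fun l => e1 l
    _ = ∫⁻ y, ∫⁻ l in Set.Ioo (0:ℝ) 1, Θ l y := lintegral_lintegral_swap hΘm
    _ ≤ ∫⁻ y, ENNReal.ofReal R * (‖g y‖₊ : ℝ≥0∞) := by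
        refine lintegral_mono fun y => ?_
        have hAm : MeasurableSet {l : ℝ | l * ‖y‖ ≤ R} :=
          measurableSet_le (by fun_prop) measurable_const
        have e2 : ∫⁻ l in Set.Ioo (0:ℝ) 1, Θ l y
            = ((‖y‖₊ : ℝ≥0∞) * ‖g y‖₊) *
              ((volume : Measure ℝ).restrict (Set.Ioo 0 1)) {l : ℝ | l * ‖y‖ ≤ R} := by
          rw [← lintegral_indicator_const hAm]
          refine lintegral_congr fun l => ?_
          simp only [hΘ, Set.indicator_apply, Set.mem_setOf_eq]
        rw [e2]
        have key : (‖y‖₊ : ℝ≥0∞) *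
            ((volume : Measure ℝ).restrict (Set.Ioo 0 1)) {l : ℝ | l * ‖y‖ ≤ R}
            ≤ ENNReal.ofReal R := by
          by_cases hy : ‖y‖ ≤ R
          · calc (‖y‖₊ : ℝ≥0∞) *
                ((volume : Measure ℝ).restrict (Set.Ioo 0 1)) {l : ℝ | l * ‖y‖ ≤ R}
                ≤ (‖y‖₊ : ℝ≥0∞) * ((volume : Measure ℝ).restrict (Set.Ioo 0 1)) Set.univ :=
                  mul_le_mul_right (measure_mono (Set.subset_univ _)) _
              _ ≤ ENNReal.ofReal R := by
                  rw [Measure.restrict_apply_univ, Real.volume_Ioo]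
                  simp only [sub_zero, ENNReal.ofReal_one, mul_one]
                  rw [← ofReal_norm_eq_coe_nnnorm]
                  exact ENNReal.ofReal_le_ofReal hy
          · push_neg at hy
            have hy0 : 0 < ‖y‖ := lt_of_le_of_lt hR hy
            have hsub : {l : ℝ | l * ‖y‖ ≤ R} ∩ Set.Ioo (0:ℝ) 1 ⊆ Set.Icc 0 (R / ‖y‖) := by
              rintro l ⟨hl1, hl2⟩
              exact ⟨hl2.1.le, (le_div_iff₀ hy0).2 hl1⟩
            calc (‖y‖₊ : ℝ≥0∞) *
                ((volume : Measure ℝ).restrict (Set.Ioo 0 1)) {l : ℝ | l * ‖y‖ ≤ R}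
                ≤ (‖y‖₊ : ℝ≥0∞) * volume (Set.Icc (0:ℝ) (R / ‖y‖)) := by
                  refine mul_le_mul_right ?_ _
                  rw [Measure.restrict_apply hAm]
                  exact measure_mono hsub
              _ = ENNReal.ofReal R := by
                  rw [Real.volume_Icc, sub_zero, ← ofReal_norm_eq_coe_nnnorm,
                    ← ENNReal.ofReal_mul (norm_nonneg y)]
                  rw [mul_div_cancel₀ _ hy0.ne']
        calc (‖y‖₊ : ℝ≥0∞) * ‖g y‖₊ *
            ((volume : Measure ℝ).restrict (Set.Ioo 0 1)) {l : ℝ | l * ‖y‖ ≤ R}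
            = ((‖y‖₊ : ℝ≥0∞) *
              ((volume : Measure ℝ).restrict (Set.Ioo 0 1)) {l : ℝ | l * ‖y‖ ≤ R}) * ‖g y‖₊ := by
              ring
          _ ≤ ENNReal.ofReal R * ‖g y‖₊ := mul_le_mul_left key _
    _ = ENNReal.ofReal R * ∫⁻ y, (‖g y‖₊ : ℝ≥0∞) :=
        lintegral_const_mul' _ _ ENNReal.ofReal_ne_top

/-- The Duoandikoetxea–Zuazua vector field `V(x) = -x ∫₀¹ f(x/λ) λ^{-(n+1)} dλ`. -/
def DZfield (n : ℕ) (f : EuclideanSpace ℝ (Fin n) → ℝ) (x : EuclideanSpace ℝ (Fin n)) :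
    EuclideanSpace ℝ (Fin n) :=
  -(∫ l in Set.Ioo (0 : ℝ) 1, f (l⁻¹ • x) / l ^ (n + 1)) • x

theorem stmt_2 (n : ℕ) (hn : 0 < n) (f : EuclideanSpace ℝ (Fin n) → ℝ)
    (hf : Integrable f) (R : ℝ) (hR : 0 ≤ R) :
    ∫⁻ x in {x : EuclideanSpace ℝ (Fin n) | ‖x‖ ≤ R}, ‖DZfield n f x‖₊ ≤
      ENNReal.ofReal (R * ∫ x, ‖f x‖) := by
  classical
  have hSm : MeasurableSet {x : EuclideanSpace ℝ (Fin n) | ‖x‖ ≤ R} :=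
    measurableSet_le (by fun_prop) measurable_const
  set μ : Measure (EuclideanSpace ℝ (Fin n)) :=
    volume.restrict {x : EuclideanSpace ℝ (Fin n) | ‖x‖ ≤ R} with hμ
  set ν : Measure ℝ := volume.restrict (Set.Ioo 0 1) with hν
  set g : EuclideanSpace ℝ (Fin n) → ℝ := hf.1.mk f with hgdef
  have hgm : Measurable g := hf.1.stronglyMeasurable_mk.measurable
  have hfg : f =ᵐ[volume] g := hf.1.ae_eq_mk
  obtain ⟨N, hNsub, hNm, hN0⟩ := exists_measurable_superset_of_null (ae_iff.1 hfg)
  -- curried integrands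
  set Fc : EuclideanSpace ℝ (Fin n) → ℝ → ℝ≥0∞ := fun x l =>
    (‖x‖₊ : ℝ≥0∞) * ((‖f (l⁻¹ • x)‖₊ : ℝ≥0∞) * (ENNReal.ofReal (l^(n+1)))⁻¹) with hFc
  set Gc : EuclideanSpace ℝ (Fin n) → ℝ → ℝ≥0∞ := fun x l =>
    (‖x‖₊ : ℝ≥0∞) * ((‖g (l⁻¹ • x)‖₊ : ℝ≥0∞) * (ENNReal.ofReal (l^(n+1)))⁻¹) with hGc
  have hGm : Measurable (Function.uncurry Gc) := by
    have : Function.uncurry Gc = fun p : EuclideanSpace ℝ (Fin n) × ℝ =>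
        (‖p.1‖₊ : ℝ≥0∞) * ((‖g (p.2⁻¹ • p.1)‖₊ : ℝ≥0∞) * (ENNReal.ofReal (p.2^(n+1)))⁻¹) := rfl
    rw [this]; fun_prop
  -- the bad set is null in the product
  have hφm : Measurable (fun p : EuclideanSpace ℝ (Fin n) × ℝ => p.2⁻¹ • p.1) := by fun_prop
  have hBm : MeasurableSet {p : EuclideanSpace ℝ (Fin n) × ℝ | p.2⁻¹ • p.1 ∈ N} := hφm hNm
  have hB : (μ.prod ν) {p : EuclideanSpace ℝ (Fin n) × ℝ | p.2⁻¹ • p.1 ∈ N} = 0 := by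
    rw [← Measure.prod_swap, Measure.map_apply measurable_swap hBm,
      Measure.measure_prod_null (measurable_swap hBm)]
    filter_upwards [ae_restrict_mem measurableSet_Ioo] with l hl
    have heq : (Prod.mk l ⁻¹' (Prod.swap ⁻¹'
        {p : EuclideanSpace ℝ (Fin n) × ℝ | p.2⁻¹ • p.1 ∈ N}))
        = (fun x : EuclideanSpace ℝ (Fin n) => l⁻¹ • x) ⁻¹' N := rfl
    simp only [heq, Pi.zero_apply]
    have h1 : μ ((fun x : EuclideanSpace ℝ (Fin n) => l⁻¹ • x) ⁻¹' N)
        ≤ volume ((fun x : EuclideanSpace ℝ (Fin n) => l⁻¹ • x) ⁻¹' N) := by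
      rw [hμ, Measure.restrict_apply (measurable_const_smul l⁻¹ hNm)]
      exact measure_mono Set.inter_subset_left
    have h2 : volume ((fun x : EuclideanSpace ℝ (Fin n) => l⁻¹ • x) ⁻¹' N) = 0 := by
      rw [Measure.addHaar_preimage_smul volume (inv_ne_zero hl.1.ne'), hN0, mul_zero]
    exact le_antisymm (h1.trans_eq h2) zero_le
  have hFG : (fun p : EuclideanSpace ℝ (Fin n) × ℝ => Fc p.1 p.2)
      =ᵐ[μ.prod ν] (fun p => Gc p.1 p.2) := by
    rw [EventuallyEq, ae_iff]
    refine measure_mono_null (fun p hp => ?_) hB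
    simp only [Set.mem_setOf_eq, hFc, hGc] at hp ⊢
    by_contra hmem
    have hfgp : f (p.2⁻¹ • p.1) = g (p.2⁻¹ • p.1) := by
      by_contra h
      exact hmem (hNsub h)
    rw [hfgp] at hp
    exact hp rfl
  -- main chain
  calc ∫⁻ x, (‖DZfield n f x‖₊ : ℝ≥0∞) ∂μ
      ≤ ∫⁻ x, (∫⁻ l, Fc x l ∂ν) ∂μ := by
        refine lintegral_mono fun x => ?_
        exact DZ_pointwise n f x
    _ = ∫⁻ x, (∫⁻ l, Gc x l ∂ν) ∂μ := by
        refine lintegral_congr_ae ?_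
        filter_upwards [Measure.ae_ae_of_ae_prod hFG] with x hx
        exact lintegral_congr_ae hx
    _ = ∫⁻ l, (∫⁻ x, Gc x l ∂μ) ∂ν := lintegral_lintegral_swap hGm.aemeasurable
    _ = ∫⁻ l, (∫⁻ y in {y : EuclideanSpace ℝ (Fin n) | l * ‖y‖ ≤ R},
          (‖y‖₊ : ℝ≥0∞) * ‖g y‖₊) ∂ν := by
        refine lintegral_congr_ae ?_
        filter_upwards [ae_restrict_mem measurableSet_Ioo] with l hl
        exact DZ_cov n g hgm R l hl
    _ ≤ ENNReal.ofReal R * ∫⁻ y, (‖g y‖₊ : ℝ≥0∞) := DZ_outer n g hgm R hR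
    _ = ENNReal.ofReal R * ∫⁻ y, (‖f y‖₊ : ℝ≥0∞) := by
        congr 1
        refine lintegral_congr_ae ?_
        filter_upwards [hfg] with y hy
        rw [hy]
    _ = ENNReal.ofReal (R * ∫ x, ‖f x‖) := by
        rw [← ofReal_integral_norm_eq_lintegral_nnnorm hf,
          ← ENNReal.ofReal_mul hR]
end
end

section
/- Let 1 ≤ q < n/(n−1) and let f: ℝⁿ → ℝ be measurable with |x| f(x) ∈ L^q(ℝⁿ). Define V(x) = −x ∫₀¹ f(x/λ) λ^{−(n+1)} dλ. Then ‖V‖_{L^q} ≤ C ‖|x| f‖_{L^q} for a constant C depending only on q and n. -/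
open MeasureTheory Filter
open scoped ENNReal

noncomputable section

open Set

section MinkowskiAux

variable {α β : Type*} [MeasurableSpace α] [MeasurableSpace β]

lemma rpow_split {a : ℝ≥0∞} (ha : a ≠ ∞) {p : ℝ} (hp : 1 < p) :
    a ^ p = a * a ^ (p - 1) := by
  rcases eq_or_ne a 0 with rfl | h0
  · rw [ENNReal.zero_rpow_of_pos (by linarith), ENNReal.zero_rpow_of_pos (by linarith), mul_zero]
  · nth_rewrite 2 [← ENNReal.rpow_one a]
    rw [← ENNReal.rpow_add _ _ h0 ha, show (1 : ℝ) + (p - 1) = p by ring]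

theorem lintegral_minkowski {μ : Measure α} {ν : Measure β} [SigmaFinite μ] [SFinite ν]
    {p : ℝ} (hp : 1 ≤ p) {F : β → α → ℝ≥0∞}
    (hF : Measurable (Function.uncurry F)) :
    (∫⁻ x, (∫⁻ l, F l x ∂ν) ^ p ∂μ) ^ (1 / p) ≤
      ∫⁻ l, (∫⁻ x, F l x ^ p ∂μ) ^ (1 / p) ∂ν := by
  have hF' : Measurable (Function.uncurry fun x l => F l x) := hF.comp measurable_swap
  set H : α → ℝ≥0∞ := fun x => ∫⁻ l, F l x ∂ν with hHdef
  have hH : Measurable H := Measurable.lintegral_prod_right hF'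
  rcases eq_or_lt_of_le hp with rfl | hp1
  · simp only [one_div, inv_one, ENNReal.rpow_one]
    exact le_of_eq (lintegral_lintegral_swap hF'.aemeasurable)
  set p' : ℝ := Real.conjExponent p with hp'def
  have hpq : p.HolderConjugate p' := Real.HolderConjugate.conjExponent hp1
  have hp0 : (0:ℝ) < p := by linarith
  set B : ℝ≥0∞ := ∫⁻ l, (∫⁻ x, F l x ^ p ∂μ) ^ (1 / p) ∂ν with hBdef
  -- key truncated estimate
  have key : ∀ k : ℕ, (∫⁻ x in spanningSets μ k, (min (H x) k) ^ p ∂μ) ≤ B ^ p := by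
    intro k
    set s := spanningSets μ k with hsdef
    have hs : MeasurableSet s := measurableSet_spanningSets μ k
    set Hm : α → ℝ≥0∞ := fun x => min (H x) k with hHmdef
    have hHm : Measurable Hm := hH.min measurable_const
    have hHmle : ∀ x, Hm x ≤ (k : ℝ≥0∞) := fun x => min_le_right _ _
    have hHmne : ∀ x, Hm x ≠ ∞ := fun x => ((hHmle x).trans_lt (ENNReal.natCast_lt_top k)).ne
    set A : ℝ≥0∞ := ∫⁻ x in s, Hm x ^ p ∂μ with hAdef
    have hAfin : A ≠ ∞ := by
      have : A ≤ (k : ℝ≥0∞) ^ p * μ s := by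
        rw [← setLIntegral_const s ((k : ℝ≥0∞) ^ p)]
        exact lintegral_mono fun x => ENNReal.rpow_le_rpow (hHmle x) hp0.le
      exact (this.trans_lt (ENNReal.mul_lt_top
        (ENNReal.rpow_lt_top_of_nonneg hp0.le (ENNReal.natCast_ne_top k))
        (measure_spanningSets_lt_top μ k))).ne
    have step1 : A ≤ ∫⁻ x in s, H x * Hm x ^ (p - 1) ∂μ := by
      refine lintegral_mono fun x => ?_
      rw [rpow_split (hHmne x) hp1]
      exact mul_le_mul_left (min_le_left _ _) _
    have step2 : ∫⁻ x in s, H x * Hm x ^ (p - 1) ∂μ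
        = ∫⁻ l, ∫⁻ x in s, F l x * Hm x ^ (p - 1) ∂μ ∂ν := by
      rw [← lintegral_lintegral_swap]
      · refine lintegral_congr fun x => ?_
        rw [hHdef]
        exact (lintegral_mul_const' _ _ (ENNReal.rpow_ne_top_of_nonneg (by linarith)
          (hHmne x))).symm
      · exact (hF'.mul ((hHm.comp measurable_fst).pow_const _)).aemeasurable
    have step3 : ∀ l, ∫⁻ x in s, F l x * Hm x ^ (p - 1) ∂μ
        ≤ (∫⁻ x, F l x ^ p ∂μ) ^ (1 / p) * A ^ (1 / p') := by
      intro l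
      have hFl : Measurable (F l) := hF.comp (measurable_prodMk_left (m := inferInstance))
      calc ∫⁻ x in s, F l x * Hm x ^ (p - 1) ∂μ
          ≤ (∫⁻ x in s, F l x ^ p ∂μ) ^ (1 / p)
            * (∫⁻ x in s, (Hm x ^ (p - 1)) ^ p' ∂μ) ^ (1 / p') :=
            ENNReal.lintegral_mul_le_Lp_mul_Lq _ hpq hFl.aemeasurable
              ((hHm.pow_const _).aemeasurable)
        _ = (∫⁻ x in s, F l x ^ p ∂μ) ^ (1 / p) * A ^ (1 / p') := by
            congr 1
            congr 1
            refine lintegral_congr fun x => ?_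
            rw [← ENNReal.rpow_mul, hpq.sub_one_mul_conj]
        _ ≤ (∫⁻ x, F l x ^ p ∂μ) ^ (1 / p) * A ^ (1 / p') := by
            gcongr
            exact Measure.restrict_le_self
    have hABA : A ≤ B * A ^ (1 / p') := by
      calc A ≤ ∫⁻ l, ∫⁻ x in s, F l x * Hm x ^ (p - 1) ∂μ ∂ν := step2 ▸ step1
        _ ≤ ∫⁻ l, (∫⁻ x, F l x ^ p ∂μ) ^ (1 / p) * A ^ (1 / p') ∂ν :=
            lintegral_mono step3
        _ = B * A ^ (1 / p') := lintegral_mul_const' _ _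
            (ENNReal.rpow_ne_top_of_nonneg (one_div_pos.mpr hpq.symm.pos).le hAfin)
    -- conclude A ≤ B ^ p
    rcases eq_or_ne A 0 with hA0 | hA0
    · rw [hA0]; exact zero_le
    have hA1p : A ^ (1 / p) ≤ B := by
      have hsplit : A = A ^ (1 / p) * A ^ (1 / p') := by
        have hsum : 1 / p + 1 / p' = 1 := by
          have h := hpq.inv_add_inv_eq_one
          rw [one_div, one_div]; linarith
        rw [← ENNReal.rpow_add _ _ hA0 hAfin, hsum, ENNReal.rpow_one]
      have : A ^ (1 / p) * A ^ (1 / p') ≤ B * A ^ (1 / p') := hsplit ▸ hABA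
      exact (ENNReal.mul_le_mul_iff_left
        (by simp [ENNReal.rpow_eq_zero_iff, hA0, hAfin])
        (ENNReal.rpow_ne_top_of_nonneg (one_div_pos.mpr hpq.symm.pos).le hAfin)).mp this
    calc A = (A ^ (1 / p)) ^ p := by
          rw [← ENNReal.rpow_mul, one_div, inv_mul_cancel₀ hp0.ne', ENNReal.rpow_one]
      _ ≤ B ^ p := ENNReal.rpow_le_rpow hA1p hp0.le
  -- monotone convergence
  have mono : ∫⁻ x, H x ^ p ∂μ = ⨆ k : ℕ, ∫⁻ x in spanningSets μ k, (min (H x) k) ^ p ∂μ := by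
    have hfk : ∀ k : ℕ, Measurable
        ((spanningSets μ k).indicator (fun x => min (H x) k ^ p)) :=
      fun k => ((hH.min measurable_const).pow_const _).indicator (measurableSet_spanningSets μ k)
    have hmono : Monotone (fun k : ℕ =>
        (spanningSets μ k).indicator (fun x => min (H x) k ^ p)) := by
      intro i j hij x
      dsimp only
      rcases em (x ∈ spanningSets μ i) with hx | hx
      · rw [Set.indicator_of_mem hx, Set.indicator_of_mem (monotone_spanningSets μ hij hx)]
        exact ENNReal.rpow_le_rpow (min_le_min le_rfl (Nat.cast_le.mpr hij)) hp0.le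
      · rw [Set.indicator_of_notMem hx]; exact zero_le
    have hsup : ∀ x, (⨆ k : ℕ, (spanningSets μ k).indicator
        (fun x => min (H x) k ^ p) x) = H x ^ p := by
      intro x
      obtain ⟨k0, hk0⟩ := mem_iUnion.mp ((iUnion_spanningSets μ).symm ▸ Set.mem_univ x)
      refine le_antisymm (iSup_le fun k => ?_) ?_
      · refine (Set.indicator_le_self _ _ x).trans ?_
        exact ENNReal.rpow_le_rpow (min_le_left _ _) hp0.le
      · rcases eq_or_ne (H x) ∞ with hHx | hHx
        · rw [hHx, ENNReal.top_rpow_of_pos hp0]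
          rw [top_le_iff, ← top_le_iff]
          calc (⊤ : ℝ≥0∞) = ⨆ k : ℕ, (k : ℝ≥0∞) := ENNReal.iSup_natCast.symm
            _ ≤ ⨆ k : ℕ, (spanningSets μ k).indicator (fun x => min (H x) k ^ p) x := by
                refine iSup_le fun k => le_iSup_of_le (max k0 k) ?_
                rw [Set.indicator_of_mem (monotone_spanningSets μ (le_max_left _ _) hk0),
                  hHx, min_eq_right le_top]
                rcases Nat.eq_zero_or_pos k with rfl | hk
                · simp
                calc (k : ℝ≥0∞) ≤ (max k0 k : ℕ) := Nat.cast_le.mpr (le_max_right _ _)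
                  _ = ((max k0 k : ℕ) : ℝ≥0∞) ^ (1:ℝ) := (ENNReal.rpow_one _).symm
                  _ ≤ ((max k0 k : ℕ) : ℝ≥0∞) ^ p := by
                      refine ENNReal.rpow_le_rpow_of_exponent_le ?_ hp
                      exact_mod_cast Nat.one_le_iff_ne_zero.mpr
                        (by omega : max k0 k ≠ 0)
        · obtain ⟨m, hm⟩ := ENNReal.exists_nat_gt hHx
          refine le_iSup_of_le (max k0 m) ?_
          rw [Set.indicator_of_mem (monotone_spanningSets μ (le_max_left _ _) hk0),
            min_eq_left]
          exact hm.le.trans (Nat.cast_le.mpr (le_max_right _ _))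
    calc ∫⁻ x, H x ^ p ∂μ
        = ∫⁻ x, ⨆ k : ℕ, (spanningSets μ k).indicator (fun x => min (H x) k ^ p) x ∂μ := by
          exact lintegral_congr fun x => (hsup x).symm
      _ = ⨆ k : ℕ, ∫⁻ x, (spanningSets μ k).indicator (fun x => min (H x) k ^ p) x ∂μ :=
          lintegral_iSup hfk hmono
      _ = ⨆ k : ℕ, ∫⁻ x in spanningSets μ k, (min (H x) k) ^ p ∂μ := by
          refine iSup_congr fun k => ?_
          rw [lintegral_indicator (measurableSet_spanningSets μ k)]
  have hfinal : ∫⁻ x, H x ^ p ∂μ ≤ B ^ p := by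
    rw [mono]; exact iSup_le key
  calc (∫⁻ x, H x ^ p ∂μ) ^ (1 / p) ≤ (B ^ p) ^ (1 / p) :=
      ENNReal.rpow_le_rpow hfinal (by positivity)
    _ = B := by rw [← ENNReal.rpow_mul, mul_one_div, div_self hp0.ne', ENNReal.rpow_one]

end MinkowskiAux

theorem stmt_3 (n : ℕ) (hn : 0 < n) (q : ℝ) (hq1 : 1 ≤ q) (hq2 : q < n / (n - 1)) :
    ∃ C > 0, ∀ f : EuclideanSpace ℝ (Fin n) → ℝ, Measurable f →
      MemLp (fun x => ‖x‖ * f x) (ENNReal.ofReal q) volume →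
      eLpNorm (DZfield n f) (ENNReal.ofReal q) volume ≤
        ENNReal.ofReal C * eLpNorm (fun x => ‖x‖ * f x) (ENNReal.ofReal q) volume := by
  have hq0 : (0:ℝ) < q := lt_of_lt_of_le one_pos hq1
  set r : ℝ := n / q - n with hrdef
  have hn2 : (1:ℝ) ≤ (n:ℝ) := by exact_mod_cast hn
  have hr : -1 < r := by
    rcases eq_or_lt_of_le hn2 with h1 | h1
    · exfalso; rw [← h1] at hq2; norm_num at hq2; linarith
    · have hn1 : (0:ℝ) < (n:ℝ) - 1 := by linarith
      have h2 : q * ((n:ℝ) - 1) < n := (lt_div_iff₀ hn1).mp hq2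
      have h3 : (n:ℝ) - 1 < n / q := by
        rw [lt_div_iff₀ hq0]; nlinarith
      simp only [hrdef]; linarith
  set S : ℝ≥0∞ := ∫⁻ l in Ioo (0:ℝ) 1, ENNReal.ofReal (l ^ r) with hSdef
  have hSfin : S ≠ ∞ := by
    have hint : IntervalIntegrable (fun l : ℝ => l ^ r) volume 0 1 :=
      intervalIntegral.intervalIntegrable_rpow' hr
    have hio : IntegrableOn (fun l : ℝ => l ^ r) (Ioo (0:ℝ) 1) volume :=
      hint.1.mono_set Ioo_subset_Ioc_self
    have hfi := hio.2
    refine ne_of_lt (lt_of_le_of_lt ?_ hfi)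
    exact lintegral_mono fun l => Real.ofReal_le_enorm _
  refine ⟨S.toReal + 1, by positivity, ?_⟩
  intro f hf hmem
  set p : ℝ≥0∞ := ENNReal.ofReal q with hpdef
  have hp0 : p ≠ 0 := by simp [hpdef, ENNReal.ofReal_eq_zero]; linarith
  have hptop : p ≠ ∞ := ENNReal.ofReal_ne_top
  have hptoReal : p.toReal = q := ENNReal.toReal_ofReal hq0.le
  set G : EuclideanSpace ℝ (Fin n) → ℝ≥0∞ := fun y => (‖‖y‖ * f y‖₊ : ℝ≥0∞) with hGdef
  have hGmeas : Measurable G := (measurable_norm.mul hf).enorm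
  set F : ℝ → EuclideanSpace ℝ (Fin n) → ℝ≥0∞ :=
    fun l x => G (l⁻¹ • x) * ENNReal.ofReal ((l ^ n)⁻¹) with hFdef
  have hsmul : Measurable fun z : ℝ × EuclideanSpace ℝ (Fin n) => z.1⁻¹ • z.2 := by
    have : (fun z : ℝ × EuclideanSpace ℝ (Fin n) => z.1⁻¹ • z.2)
        = (fun z : ℝ × EuclideanSpace ℝ (Fin n) => z.1 • z.2)
          ∘ fun z => (z.1⁻¹, z.2) := rfl
    rw [this]
    exact continuous_smul.measurable.comp (measurable_fst.inv.prodMk measurable_snd)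
  have hFmeas : Measurable (Function.uncurry F) :=
    (hGmeas.comp hsmul).mul ((measurable_fst.pow_const n).inv.ennreal_ofReal)
  set K : ℝ≥0∞ := (∫⁻ y, G y ^ q ∂(volume : Measure (EuclideanSpace ℝ (Fin n)))) ^ (1/q)
    with hKdef
  have heLg : eLpNorm (fun x => ‖x‖ * f x) p volume = K := by
    rw [eLpNorm_eq_lintegral_rpow_enorm_toReal hp0 hptop, hptoReal]; rfl
  -- Step 1: pointwise bound
  have hpt : ∀ x, (‖DZfield n f x‖₊ : ℝ≥0∞) ≤ ∫⁻ l in Ioo (0:ℝ) 1, F l x := by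
    intro x
    have h1 : (‖DZfield n f x‖₊ : ℝ≥0∞)
        = (‖∫ l in Ioo (0:ℝ) 1, f (l⁻¹ • x) / l ^ (n+1)‖₊ : ℝ≥0∞) * (‖x‖₊ : ℝ≥0∞) := by
      rw [DZfield, nnnorm_smul, nnnorm_neg]
      push_cast
      ring
    rw [h1]
    calc (‖∫ l in Ioo (0:ℝ) 1, f (l⁻¹ • x) / l ^ (n+1)‖₊ : ℝ≥0∞) * (‖x‖₊ : ℝ≥0∞)
        ≤ (∫⁻ l in Ioo (0:ℝ) 1, (‖f (l⁻¹ • x) / l ^ (n+1)‖₊ : ℝ≥0∞)) * (‖x‖₊ : ℝ≥0∞) :=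
          mul_le_mul_left (enorm_integral_le_lintegral_enorm _) _
      _ = ∫⁻ l in Ioo (0:ℝ) 1, (‖f (l⁻¹ • x) / l ^ (n+1)‖₊ : ℝ≥0∞) * (‖x‖₊ : ℝ≥0∞) :=
          (lintegral_mul_const' _ _ ENNReal.coe_ne_top).symm
      _ = ∫⁻ l in Ioo (0:ℝ) 1, F l x := by
          refine setLIntegral_congr_fun measurableSet_Ioo (fun l hl => ?_)
          have hl0 : (0:ℝ) < l := hl.1
          have hlne : l ≠ 0 := hl0.ne'
          have hx : ‖x‖ = l * ‖l⁻¹ • x‖ := by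
            rw [norm_smul, norm_inv, Real.norm_eq_abs, abs_of_pos hl0, ← mul_assoc,
              mul_inv_cancel₀ hlne, one_mul]
          -- now prove the pointwise identity
          have key : (‖f (l⁻¹ • x) / l ^ (n+1)‖₊ : ℝ≥0∞) * (‖x‖₊ : ℝ≥0∞) = F l x := by
            rw [hFdef]
            dsimp only
            rw [← enorm_eq_nnnorm, ← ofReal_norm, ← enorm_eq_nnnorm, ← ofReal_norm, hGdef]
            dsimp only
            rw [← enorm_eq_nnnorm, ← ofReal_norm, ← ENNReal.ofReal_mul (norm_nonneg _),
              ← ENNReal.ofReal_mul (norm_nonneg _)]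
            congr 1
            rw [hx, Real.norm_eq_abs, Real.norm_eq_abs, abs_div, abs_of_pos (pow_pos hl0 _),
              abs_mul, abs_of_nonneg (norm_nonneg _)]
            field_simp [pow_succ]
            ring
          exact key
  -- Step 1 conclusion
  have step1 : eLpNorm (DZfield n f) p volume
      ≤ (∫⁻ x, (∫⁻ l in Ioo (0:ℝ) 1, F l x) ^ q ∂volume) ^ (1/q) := by
    rw [eLpNorm_eq_lintegral_rpow_enorm_toReal hp0 hptop, hptoReal]
    exact ENNReal.rpow_le_rpow
      (lintegral_mono fun x => ENNReal.rpow_le_rpow (hpt x) hq0.le) (by positivity)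
  -- Step 2: Minkowski's integral inequality
  have step2 : (∫⁻ x, (∫⁻ l in Ioo (0:ℝ) 1, F l x) ^ q ∂volume) ^ (1/q)
      ≤ ∫⁻ l in Ioo (0:ℝ) 1, (∫⁻ x, F l x ^ q ∂volume) ^ (1/q) :=
    lintegral_minkowski hq1 hFmeas
  -- Step 3: scaling identity
  have hd : Module.finrank ℝ (EuclideanSpace ℝ (Fin n)) = n := by
    simp [finrank_euclideanSpace]
  have hKtop : K ≠ ∞ := by
    rw [← heLg]; exact hmem.2.ne
  have hscale : ∀ l ∈ Ioo (0:ℝ) 1,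
      (∫⁻ x, F l x ^ q ∂volume) ^ (1/q) = ENNReal.ofReal (l ^ r) * K := by
    intro l hl
    have hl0 : (0:ℝ) < l := hl.1
    have hlne : l ≠ 0 := hl0.ne'
    have hctop : ENNReal.ofReal ((l ^ n)⁻¹) ^ q ≠ ∞ :=
      ENNReal.rpow_ne_top_of_nonneg hq0.le ENNReal.ofReal_ne_top
    have hmap : (∫⁻ x, G (l⁻¹ • x) ^ q ∂(volume : Measure (EuclideanSpace ℝ (Fin n))))
        = ENNReal.ofReal (l ^ n) * ∫⁻ y, G y ^ q := by
      have hmq : Measurable fun y => G y ^ q := hGmeas.pow_const q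
      have hms : Measurable fun x : EuclideanSpace ℝ (Fin n) => l⁻¹ • x :=
        (continuous_const_smul _).measurable
      rw [← lintegral_map hmq hms,
        show (fun x : EuclideanSpace ℝ (Fin n) => l⁻¹ • x) = (l⁻¹ • ·) from rfl,
        Measure.map_addHaar_smul volume (inv_ne_zero hlne), lintegral_smul_measure]
      congr 2
      rw [hd, inv_pow, inv_inv, abs_of_pos (pow_pos hl0 n)]
    have hreal : (l ^ n : ℝ) ^ (1/q) * ((l:ℝ) ^ n)⁻¹ = l ^ r := by
      rw [← Real.rpow_natCast l n, ← Real.rpow_neg hl0.le,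
        ← Real.rpow_mul hl0.le, ← Real.rpow_add hl0, hrdef]
      congr 1
      rw [mul_one_div]
      ring
    calc (∫⁻ x, F l x ^ q ∂volume) ^ (1/q)
        = ((∫⁻ x, G (l⁻¹ • x) ^ q ∂volume) * ENNReal.ofReal ((l ^ n)⁻¹) ^ q) ^ (1/q) := by
          congr 1
          rw [← lintegral_mul_const' _ _ hctop]
          exact lintegral_congr fun x => ENNReal.mul_rpow_of_nonneg _ _ hq0.le
      _ = (ENNReal.ofReal (l ^ n) * (∫⁻ y, G y ^ q) * ENNReal.ofReal ((l ^ n)⁻¹) ^ q) ^ (1/q) := by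
          rw [hmap]
      _ = ENNReal.ofReal (l ^ r) * K := by
          rw [ENNReal.mul_rpow_of_nonneg _ _ (by positivity : (0:ℝ) ≤ 1/q),
            ENNReal.mul_rpow_of_nonneg _ _ (by positivity : (0:ℝ) ≤ 1/q),
            ← ENNReal.rpow_mul, mul_one_div, div_self hq0.ne', ENNReal.rpow_one,
            ENNReal.ofReal_rpow_of_pos (pow_pos hl0 n),
            mul_right_comm, ← ENNReal.ofReal_mul (by positivity), hreal]
  -- Step 4
  have step4 : (∫⁻ l in Ioo (0:ℝ) 1, (∫⁻ x, F l x ^ q ∂volume) ^ (1/q)) = S * K := by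
    rw [setLIntegral_congr_fun measurableSet_Ioo hscale, hSdef]
    exact lintegral_mul_const' _ _ hKtop
  -- conclusion
  calc eLpNorm (DZfield n f) p volume
      ≤ ∫⁻ l in Ioo (0:ℝ) 1, (∫⁻ x, F l x ^ q ∂volume) ^ (1/q) := step1.trans step2
    _ = S * K := step4
    _ ≤ ENNReal.ofReal (S.toReal + 1) * K := by
        refine mul_le_mul_left ?_ _
        calc S = ENNReal.ofReal S.toReal := (ENNReal.ofReal_toReal hSfin).symm
          _ ≤ ENNReal.ofReal (S.toReal + 1) := ENNReal.ofReal_le_ofReal (by linarith)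
    _ = ENNReal.ofReal (S.toReal + 1) * eLpNorm (fun x => ‖x‖ * f x) p volume := by
        rw [heLg]
end
end

section
/- Let f ∈ L¹(ℝ³) and V(x) = −x∫₀¹ f(x/λ)λ^{−4}dλ. Then for every R > 0, ∫_{|x|≤R} ∫_{ℝ³} (1+|x−y|)^{−4} |V(y)| dy dx < ∞; more precisely this double integral is bounded by C(R⁴+1)‖f‖_{L¹}. -/
open MeasureTheory Filter
open scoped ENNReal

noncomputable section

/-- The Duoandikoetxea–Zuazua vector field on ℝ³: `V(x) = -x ∫₀¹ f(x/λ) λ^{-4} dλ`. -/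
def DZfield3 (f : E3 → ℝ) (x : E3) : E3 :=
  -(∫ l in Set.Ioo (0 : ℝ) 1, f (l⁻¹ • x) / l ^ 4) • x

open Set

lemma E3_finrank : Module.finrank ℝ E3 = 3 := finrank_euclideanSpace_fin

lemma rpow_neg4 {t : ℝ} (ht : 0 < t) : t ^ (-4 : ℝ) = ((t ^ 4)⁻¹ : ℝ) := by
  rw [show (-4:ℝ) = -((4:ℕ):ℝ) by norm_num, Real.rpow_neg ht.le, Real.rpow_natCast]

def Kker (x y : E3) : ℝ≥0∞ := ENNReal.ofReal ((1 + ‖x - y‖) ^ (-4 : ℝ))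

def DZN (f : E3 → ℝ) (y : E3) : ℝ≥0∞ :=
  ∫⁻ l in Set.Ioo (0:ℝ) 1, (‖f (l⁻¹ • y)‖₊ : ℝ≥0∞) / ENNReal.ofReal (l ^ 4)

def DZG (R : ℝ) (y : E3) : ℝ≥0∞ := ∫⁻ x in {x : E3 | ‖x‖ ≤ R}, Kker x y

def JBc : ℝ≥0∞ := ∫⁻ x : E3, ENNReal.ofReal ((1 + ‖x‖) ^ (-4 : ℝ))

lemma meas_ker : Measurable (fun w : E3 => ENNReal.ofReal ((1 + ‖w‖) ^ (-4 : ℝ))) := by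
  have h : ∀ w : E3, (1 + ‖w‖) ^ (-4 : ℝ) = ((1 + ‖w‖) ^ 4)⁻¹ := fun w =>
    rpow_neg4 (by positivity)
  simp_rw [h]
  exact (((measurable_const.add measurable_norm).pow_const 4).inv).ennreal_ofReal

lemma JBc_ne_top : JBc ≠ ⊤ := by
  have h : Integrable (fun x : E3 => (1 + ‖x‖) ^ (-(4:ℝ))) :=
    integrable_one_add_norm (by rw [E3_finrank]; norm_num)
  have h2 := ofReal_integral_eq_lintegral_ofReal h
    (Filter.Eventually.of_forall fun x => Real.rpow_nonneg (by positivity) _)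
  have h3 : JBc = ENNReal.ofReal (∫ x : E3, (1 + ‖x‖) ^ (-(4:ℝ))) := by rw [h2]; rfl
  rw [h3]; exact ENNReal.ofReal_ne_top

lemma translate_lintegral (y : E3) :
    ∫⁻ x : E3, Kker x y = JBc :=
  (measurePreserving_sub_right (volume : Measure E3) y).lintegral_comp meas_ker

lemma Kker_meas : Measurable (fun p : E3 × E3 => Kker p.1 p.2) :=
  meas_ker.comp (measurable_fst.sub measurable_snd)

lemma Sball (R : ℝ) : {x : E3 | ‖x‖ ≤ R} = Metric.closedBall (0:E3) R := by
  ext x; simp [Metric.mem_closedBall, dist_zero_right]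

lemma Smeas (R : ℝ) : MeasurableSet {x : E3 | ‖x‖ ≤ R} := by
  rw [Sball]; exact measurableSet_closedBall

lemma DZG_meas (R : ℝ) : Measurable (DZG R) :=
  Measurable.lintegral_prod_left' (μ := volume.restrict {x : E3 | ‖x‖ ≤ R}) Kker_meas

lemma DZG_le (R : ℝ) (y : E3) : DZG R y ≤ JBc := by
  rw [DZG, ← translate_lintegral y]
  exact setLIntegral_le_lintegral _ _

lemma DZG_ne_top (R : ℝ) (y : E3) : DZG R y ≠ ⊤ :=
  ((DZG_le R y).trans_lt (lt_top_iff_ne_top.2 JBc_ne_top)).ne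

lemma vol_S (R : ℝ) (hR : 0 ≤ R) :
    (volume : Measure E3) {x : E3 | ‖x‖ ≤ R}
      = ENNReal.ofReal (R^3) * volume (Metric.ball (0:E3) 1) := by
  rw [Sball, Measure.addHaar_closedBall _ _ hR, E3_finrank]

lemma DZG_far {R : ℝ} (hR : 0 < R) {y : E3} (hy : 2*R ≤ ‖y‖) :
    DZG R y ≤ (ENNReal.ofReal (R^3) * volume (Metric.ball (0:E3) 1))
      * ENNReal.ofReal (16 / ‖y‖^4) := by
  have hy0 : 0 < ‖y‖ := lt_of_lt_of_le (by positivity) hy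
  have hptw : ∀ x ∈ {x : E3 | ‖x‖ ≤ R}, Kker x y ≤ ENNReal.ofReal (16 / ‖y‖^4) := by
    intro x hx
    have hx' : ‖x‖ ≤ R := hx
    have h2 : ‖y‖ - ‖x‖ ≤ ‖x - y‖ := by
      have := abs_norm_sub_norm_le x y
      have h3 : -(‖x‖ - ‖y‖) ≤ |‖x‖ - ‖y‖| := neg_le_abs _
      linarith
    have h1 : ‖y‖/2 ≤ ‖x - y‖ := by linarith
    apply ENNReal.ofReal_le_ofReal
    rw [rpow_neg4 (by positivity : (0:ℝ) < 1 + ‖x - y‖)]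
    have h164 : 16 / ‖y‖^4 = (((‖y‖/2)^4)⁻¹ : ℝ) := by
      rw [div_pow]; rw [inv_div]; norm_num
    rw [h164]
    apply inv_anti₀ (by positivity)
    have hb : ‖y‖/2 ≤ 1 + ‖x - y‖ := by linarith
    exact pow_le_pow_left₀ (by positivity) hb 4
  calc DZG R y ≤ ∫⁻ x in {x : E3 | ‖x‖ ≤ R}, ENNReal.ofReal (16/‖y‖^4) :=
        setLIntegral_mono' (Smeas R) hptw
    _ = ENNReal.ofReal (16/‖y‖^4) * volume {x : E3 | ‖x‖ ≤ R} := setLIntegral_const _ _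
    _ = _ := by rw [vol_S R hR.le]; ring

lemma DZnorm_le (f : E3 → ℝ) (y : E3) :
    (‖DZfield3 f y‖₊ : ℝ≥0∞) ≤ ‖y‖₊ * DZN f y := by
  rw [DZfield3, nnnorm_smul, nnnorm_neg, ENNReal.coe_mul, mul_comm]
  apply mul_le_mul_right
  refine le_trans (enorm_integral_le_lintegral_enorm _) ?_
  rw [DZN]
  apply lintegral_mono_ae
  filter_upwards [ae_restrict_mem measurableSet_Ioo] with l hl
  have hl4 : (0:ℝ) < l ^ 4 := pow_pos hl.1 4
  rw [enorm_eq_nnnorm, nnnorm_div, ENNReal.coe_div (by simpa using hl4.ne'), ← enorm_eq_nnnorm (l ^ 4),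
    Real.enorm_eq_ofReal hl4.le]

lemma qmp_snd {α β : Type*} [MeasurableSpace α] [MeasurableSpace β] {μ : Measure α}
    {ν : Measure β} [SFinite ν] :
    Measure.QuasiMeasurePreserving (Prod.snd : α × β → β) (μ.prod ν) ν :=
  ⟨measurable_snd, by
    rw [Measure.map_snd_prod]
    exact Measure.AbsolutelyContinuous.mk fun s _ h => by simp [h]⟩

lemma qmp_T :
    Measure.QuasiMeasurePreserving (fun p : ℝ × E3 => p.1⁻¹ • p.2)
      (((volume : Measure ℝ).restrict (Set.Ioo (0:ℝ) 1)).prod volume) volume := by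
  have hmeas : Measurable (fun p : ℝ × E3 => p.1⁻¹ • p.2) :=
    measurable_fst.inv.smul measurable_snd
  refine ⟨hmeas, Measure.AbsolutelyContinuous.mk fun s hs h0 => ?_⟩
  rw [Measure.map_apply hmeas hs, Measure.prod_apply (hmeas hs)]
  have h : ∀ᵐ l ∂((volume : Measure ℝ).restrict (Set.Ioo (0:ℝ) 1)),
      (volume : Measure E3) (Prod.mk l ⁻¹' ((fun p : ℝ × E3 => p.1⁻¹ • p.2) ⁻¹' s)) = 0 := by
    filter_upwards [ae_restrict_mem measurableSet_Ioo] with l hl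
    have hl0 : l⁻¹ ≠ 0 := inv_ne_zero hl.1.ne'
    have he : (Prod.mk l ⁻¹' ((fun p : ℝ × E3 => p.1⁻¹ • p.2) ⁻¹' s))
        = (fun y : E3 => l⁻¹ • y) ⁻¹' s := rfl
    rw [he, Measure.addHaar_preimage_smul volume hl0, h0, mul_zero]
  rw [lintegral_congr_ae h, lintegral_zero]

lemma scale_lintegral {l : ℝ} (hl : 0 < l) {φ : E3 → ℝ≥0∞}
    (hφ : AEMeasurable φ (volume : Measure E3)) :
    ∫⁻ y, φ y = ENNReal.ofReal (l ^ 3) * ∫⁻ z, φ (l • z) := by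
  have hl0 : l ≠ 0 := hl.ne'
  have hmap := Measure.map_addHaar_smul (volume : Measure E3) hl0
  rw [E3_finrank] at hmap
  have habs : Measure.map (fun x : E3 => l • x) volume ≪ volume := by
    rw [hmap]
    exact Measure.AbsolutelyContinuous.mk fun s _ h => by simp [h]
  have h1 : ∫⁻ a, φ a ∂(Measure.map (fun x : E3 => l • x) volume)
      = ∫⁻ z, φ (l • z) :=
    lintegral_map' (hφ.mono' habs) (aemeasurable_id'.const_smul l)
  rw [hmap] at h1
  rw [lintegral_smul_measure, smul_eq_mul] at h1
  have hpos : 0 < l ^ 3 := by positivity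
  have habsval : ENNReal.ofReal |(l ^ 3)⁻¹| = ENNReal.ofReal ((l ^ 3)⁻¹) := by
    rw [abs_of_pos (by positivity)]
  rw [habsval] at h1
  rw [← h1, ← mul_assoc, ← ENNReal.ofReal_mul hpos.le, mul_inv_cancel₀ hpos.ne',
    ENNReal.ofReal_one, one_mul]

lemma DZN_aemeas {f : E3 → ℝ} (hf : AEMeasurable (fun z => (‖f z‖₊ : ℝ≥0∞)) volume) :
    AEMeasurable (DZN f) volume := by
  obtain ⟨g, hg, hfg⟩ := hf
  refine ⟨fun y => ∫⁻ l in Set.Ioo (0:ℝ) 1, g (l⁻¹ • y) / ENNReal.ofReal (l^4), ?_, ?_⟩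
  · exact Measurable.lintegral_prod_left'
      (μ := (volume : Measure ℝ).restrict (Set.Ioo (0:ℝ) 1))
      ((hg.comp (measurable_fst.inv.smul measurable_snd)).div
        ((measurable_fst.pow_const 4).ennreal_ofReal))
  · have hswap := (Measure.measurePreserving_swap (μ := (volume : Measure E3))
      (ν := (volume : Measure ℝ).restrict (Set.Ioo (0:ℝ) 1))).quasiMeasurePreserving
    have hqmp := qmp_T.comp hswap
    have hcomp := hqmp.ae_eq hfg
    have hsect := Measure.ae_ae_of_ae_prod hcomp
    filter_upwards [hsect] with y hy
    refine lintegral_congr_ae (hy.mono fun l h => ?_)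
    have h' : (‖f (l⁻¹ • y)‖₊ : ℝ≥0∞) = g (l⁻¹ • y) := h
    simp only []
    rw [h']

lemma key_estimate {R : ℝ} (hR : 0 < R) (z : E3) :
    (∫⁻ l in Set.Ioo (0:ℝ) 1, DZG R (l • z)) * ‖z‖₊
      ≤ ENNReal.ofReal (2*R) * JBc + volume (Metric.ball (0:E3) 1) := by
  rcases eq_or_lt_of_le (norm_nonneg z) with hz | hz
  · have hz0 : (‖z‖₊ : ℝ≥0∞) = 0 := by
      simp [nnnorm_eq_zero.mpr (norm_eq_zero.mp hz.symm)]
    rw [hz0, mul_zero]; exact zero_le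
  set v := volume (Metric.ball (0:E3) 1) with hv
  set ν := (volume : Measure ℝ).restrict (Set.Ioo (0:ℝ) 1) with hν
  set A : Set ℝ := {l : ℝ | l * ‖z‖ ≤ 2*R} with hA
  have hAmeas : MeasurableSet A := measurableSet_le (measurable_id.mul_const _) measurable_const
  have hsplit := (lintegral_add_compl (μ := ν) (fun l => DZG R (l • z)) hAmeas).symm
  rw [hsplit, add_mul]
  refine add_le_add ?_ ?_
  · -- region where l‖z‖ ≤ 2R
    have h1 : ∫⁻ l in A, DZG R (l • z) ∂ν ≤ JBc * ν A := by
      refine le_trans (setLIntegral_mono' hAmeas fun l _ => DZG_le R _) ?_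
      rw [setLIntegral_const]
    have hνA : ν A ≤ ENNReal.ofReal (2*R/‖z‖) := by
      rw [hν, Measure.restrict_apply hAmeas]
      have hsub2 : A ∩ Set.Ioo (0:ℝ) 1 ⊆ Set.Ioc (0:ℝ) (2*R/‖z‖) := fun l hl =>
        Set.mem_Ioc.mpr ⟨hl.2.1, (le_div_iff₀ hz).mpr hl.1⟩
      refine le_trans (measure_mono hsub2) ?_
      rw [Real.volume_Ioc, sub_zero]
    calc (∫⁻ l in A, DZG R (l • z) ∂ν) * ‖z‖₊
        ≤ (JBc * ENNReal.ofReal (2*R/‖z‖)) * ENNReal.ofReal ‖z‖ := by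
          rw [← enorm_eq_nnnorm, ← ofReal_norm]
          exact mul_le_mul' (h1.trans (mul_le_mul_right hνA _)) le_rfl
      _ = JBc * ENNReal.ofReal (2*R/‖z‖ * ‖z‖) := by
          rw [mul_assoc, ENNReal.ofReal_mul (by positivity)]
      _ = ENNReal.ofReal (2*R) * JBc := by
          rw [div_mul_cancel₀ _ hz.ne', mul_comm]
  · -- region where l‖z‖ > 2R
    set t : ℝ := 2*R/‖z‖ with htdef
    have ht0 : 0 < t := by positivity
    have hres : ν.restrict Aᶜ = (volume : Measure ℝ).restrict (Aᶜ ∩ Set.Ioo 0 1) := by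
      rw [hν, Measure.restrict_restrict hAmeas.compl]
    have hptw : ∀ l ∈ Aᶜ ∩ Set.Ioo (0:ℝ) 1,
        DZG R (l • z) ≤ ((ENNReal.ofReal (R^3) * v) * ENNReal.ofReal (16/‖z‖^4))
          * ENNReal.ofReal ((l^4)⁻¹) := by
      intro l hl
      have hl0 : 0 < l := hl.2.1
      have hlz' : 2*R < l * ‖z‖ := lt_of_not_ge hl.1
      have hlz : 2*R ≤ ‖l • z‖ := by
        rw [norm_smul, Real.norm_eq_abs, abs_of_pos hl0]; exact hlz'.le
      refine (DZG_far hR hlz).trans ?_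
      rw [mul_assoc (ENNReal.ofReal (R^3) * v)]
      apply mul_le_mul_right
      rw [← ENNReal.ofReal_mul (by positivity)]
      apply ENNReal.ofReal_le_ofReal
      rw [norm_smul, Real.norm_eq_abs, abs_of_pos hl0, mul_pow]
      have hq : 16 / (l^4 * ‖z‖^4) = 16/‖z‖^4 * (l^4)⁻¹ := by
        field_simp
      rw [hq]
    have hsubset : Aᶜ ∩ Set.Ioo (0:ℝ) 1 ⊆ Set.Ioi t := by
      intro l hl
      have h2 : 2*R < l * ‖z‖ := lt_of_not_ge hl.1
      exact (div_lt_iff₀ hz).mpr (by linarith)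
    have hmain : ∫⁻ l in Aᶜ, DZG R (l • z) ∂ν
        ≤ ((ENNReal.ofReal (R^3) * v) * ENNReal.ofReal (16/‖z‖^4))
          * ∫⁻ l in Set.Ioi t, ENNReal.ofReal ((l^4)⁻¹) := by
      calc ∫⁻ l in Aᶜ, DZG R (l • z) ∂ν
          = ∫⁻ l in Aᶜ ∩ Set.Ioo 0 1, DZG R (l • z) := by rw [hres]
        _ ≤ ∫⁻ l in Aᶜ ∩ Set.Ioo 0 1,
            ((ENNReal.ofReal (R^3) * v) * ENNReal.ofReal (16/‖z‖^4))
              * ENNReal.ofReal ((l^4)⁻¹) :=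
            setLIntegral_mono' (hAmeas.compl.inter measurableSet_Ioo) hptw
        _ ≤ ∫⁻ l in Set.Ioi t,
            ((ENNReal.ofReal (R^3) * v) * ENNReal.ofReal (16/‖z‖^4))
              * ENNReal.ofReal ((l^4)⁻¹) := lintegral_mono_set hsubset
        _ = _ := lintegral_const_mul' _ _
            (ENNReal.mul_ne_top
              (ENNReal.mul_ne_top ENNReal.ofReal_ne_top measure_ball_lt_top.ne)
              ENNReal.ofReal_ne_top)
    have hIoi : ∫⁻ l in Set.Ioi t, ENNReal.ofReal ((l^4)⁻¹)
        = ENNReal.ofReal (t^(-3:ℝ)/3) := by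
      have hint : IntegrableOn (fun l : ℝ => l ^ (-4:ℝ)) (Set.Ioi t) :=
        integrableOn_Ioi_rpow_of_lt (by norm_num) ht0
      have hcong : ∀ l ∈ Set.Ioi t, (l:ℝ) ^ (-4:ℝ) = ((l^4)⁻¹:ℝ) := fun l hl =>
        rpow_neg4 (ht0.trans hl)
      have hint' : IntegrableOn (fun l : ℝ => ((l^4)⁻¹ : ℝ)) (Set.Ioi t) :=
        (integrableOn_congr_fun hcong measurableSet_Ioi).mp hint
      have hofreal := ofReal_integral_eq_lintegral_ofReal hint'
        (Filter.Eventually.of_forall fun l => by positivity)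
      rw [← hofreal]
      congr 1
      rw [← setIntegral_congr_fun measurableSet_Ioi hcong]
      rw [integral_Ioi_rpow_of_lt (by norm_num) ht0]
      norm_num
    calc (∫⁻ l in Aᶜ, DZG R (l • z) ∂ν) * ‖z‖₊
        ≤ (((ENNReal.ofReal (R^3) * v) * ENNReal.ofReal (16/‖z‖^4))
            * ENNReal.ofReal (t^(-3:ℝ)/3)) * ENNReal.ofReal ‖z‖ := by
          rw [← enorm_eq_nnnorm, ← ofReal_norm]
          exact mul_le_mul' (hmain.trans_eq (by rw [hIoi])) le_rfl
      _ = v * ENNReal.ofReal (R^3 * (16/‖z‖^4) * (t^(-3:ℝ)/3) * ‖z‖) := by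
          rw [ENNReal.ofReal_mul (by positivity : (0:ℝ) ≤ R^3 * (16/‖z‖^4) * (t^(-3:ℝ)/3)),
            ENNReal.ofReal_mul (by positivity : (0:ℝ) ≤ R^3 * (16/‖z‖^4)),
            ENNReal.ofReal_mul (by positivity : (0:ℝ) ≤ R^3)]
          ring
      _ ≤ v * ENNReal.ofReal 1 := by
          apply mul_le_mul_right
          apply ENNReal.ofReal_le_ofReal
          have ht3 : t^(-3:ℝ) = ((t^3)⁻¹ : ℝ) := by
            rw [show (-3:ℝ) = -((3:ℕ):ℝ) by norm_num, Real.rpow_neg ht0.le, Real.rpow_natCast]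
          have heq : R^3 * (16/‖z‖^4) * ((t^3)⁻¹/3) * ‖z‖ = 2/3 := by
            rw [htdef, div_pow, inv_div]
            field_simp
            ring
          rw [ht3, heq]
          norm_num
      _ = v := by rw [ENNReal.ofReal_one, mul_one]
theorem stmt_18 :
    ∃ C > 0, ∀ f : E3 → ℝ, Integrable f → ∀ R > (0 : ℝ),
      ∫⁻ x in {x : E3 | ‖x‖ ≤ R}, ∫⁻ y,
          ENNReal.ofReal ((1 + ‖x - y‖) ^ (-4 : ℝ)) * ‖DZfield3 f y‖₊ ≤
        ENNReal.ofReal (C * (R ^ 4 + 1) * ∫ x, ‖f x‖) := by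
  have hct : JBc ≠ ⊤ := JBc_ne_top
  set v : ℝ≥0∞ := volume (Metric.ball (0:E3) 1) with hv
  have hvt : v ≠ ⊤ := measure_ball_lt_top.ne
  set C : ℝ := (2 * JBc + v).toReal + 1 with hCdef
  have hC0 : 0 < C := by
    have := ENNReal.toReal_nonneg (a := 2 * JBc + v); rw [hCdef]; linarith
  refine ⟨C, hC0, ?_⟩
  intro f hf R hR
  have hFmeas : AEMeasurable (fun z : E3 => (‖f z‖₊ : ℝ≥0∞)) volume :=
    hf.aestronglyMeasurable.enorm
  have hNmeas : AEMeasurable (DZN f) volume := DZN_aemeas hFmeas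
  have hBne : (ENNReal.ofReal (2*R) * JBc + v) ≠ ⊤ :=
    ENNReal.add_ne_top.mpr ⟨ENNReal.mul_ne_top ENNReal.ofReal_ne_top hct, hvt⟩
  -- step 1
  have step1 : (∫⁻ x in {x : E3 | ‖x‖ ≤ R}, ∫⁻ y, Kker x y * ‖DZfield3 f y‖₊)
      ≤ ∫⁻ x in {x : E3 | ‖x‖ ≤ R}, ∫⁻ y, Kker x y * (‖y‖₊ * DZN f y) :=
    lintegral_mono fun x => lintegral_mono fun y => mul_le_mul_right (DZnorm_le f y) _
  -- swap 1
  have hint1 : AEMeasurable (fun p : E3 × E3 => Kker p.1 p.2 * (‖p.2‖₊ * DZN f p.2))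
      ((volume.restrict {x : E3 | ‖x‖ ≤ R}).prod volume) :=
    (Kker_meas.aemeasurable).mul ((measurable_snd.enorm.aemeasurable).mul
      (hNmeas.comp_quasiMeasurePreserving qmp_snd))
  have swap1 := lintegral_lintegral_swap (f := fun x y => Kker x y * (‖y‖₊ * DZN f y)) hint1
  -- step 2
  have step2 : (∫⁻ y, ∫⁻ x in {x : E3 | ‖x‖ ≤ R}, Kker x y * (‖y‖₊ * DZN f y))
      = ∫⁻ y, DZG R y * (‖y‖₊ * DZN f y) :=
    lintegral_congr fun y => lintegral_mul_const'' _
      (Kker_meas.comp (measurable_id.prodMk measurable_const)).aemeasurable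
  -- step 3
  have step3 : (∫⁻ y, DZG R y * (‖y‖₊ * DZN f y))
      = ∫⁻ y, ∫⁻ l in Set.Ioo (0:ℝ) 1,
          (DZG R y * ‖y‖₊) * ((‖f (l⁻¹ • y)‖₊ : ℝ≥0∞) / ENNReal.ofReal (l^4)) := by
    refine lintegral_congr fun y => ?_
    rw [← mul_assoc, DZN,
      ← lintegral_const_mul' _ _ (ENNReal.mul_ne_top (DZG_ne_top R y) ENNReal.coe_ne_top)]
  -- swap 2
  have hint2 : AEMeasurable (fun p : E3 × ℝ =>
      (DZG R p.1 * ‖p.1‖₊) * ((‖f (p.2⁻¹ • p.1)‖₊ : ℝ≥0∞) / ENNReal.ofReal (p.2^4)))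
      ((volume : Measure E3).prod ((volume : Measure ℝ).restrict (Set.Ioo (0:ℝ) 1))) := by
    have h1 : AEMeasurable (fun p : ℝ × E3 => ((‖f (p.1⁻¹ • p.2)‖₊ : ℝ≥0∞)))
        (((volume : Measure ℝ).restrict (Set.Ioo (0:ℝ) 1)).prod volume) :=
      hFmeas.comp_quasiMeasurePreserving qmp_T
    exact (((DZG_meas R).comp measurable_fst).mul measurable_fst.enorm).aemeasurable.mul
      (h1.prod_swap.div ((measurable_snd.pow_const 4).ennreal_ofReal).aemeasurable)
  have swap2 := lintegral_lintegral_swap (f := fun y l => (DZG R y * ‖y‖₊) * ((‖f (l⁻¹ • y)‖₊ : ℝ≥0∞) / ENNReal.ofReal (l^4))) hint2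
  -- step 4 : change of variables
  have step4 : (∫⁻ l in Set.Ioo (0:ℝ) 1, ∫⁻ y,
        (DZG R y * ‖y‖₊) * ((‖f (l⁻¹ • y)‖₊ : ℝ≥0∞) / ENNReal.ofReal (l^4)))
      = ∫⁻ l in Set.Ioo (0:ℝ) 1, ∫⁻ z, DZG R (l • z) * (‖z‖₊ * (‖f z‖₊ : ℝ≥0∞)) := by
    refine lintegral_congr_ae ?_
    filter_upwards [ae_restrict_mem measurableSet_Ioo] with l hl
    have hl0 : 0 < l := hl.1
    have hφ : AEMeasurable (fun y : E3 =>
        (DZG R y * ‖y‖₊) * ((‖f (l⁻¹ • y)‖₊ : ℝ≥0∞) / ENNReal.ofReal (l^4))) volume :=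
      ((DZG_meas R).mul measurable_id.enorm).aemeasurable.mul
        ((hFmeas.comp_quasiMeasurePreserving
          (Measure.quasiMeasurePreserving_smul volume (inv_ne_zero hl0.ne'))).div
          aemeasurable_const)
    rw [scale_lintegral hl0 hφ, ← lintegral_const_mul' _ _ ENNReal.ofReal_ne_top]
    refine lintegral_congr fun z => ?_
    have hinv : l⁻¹ • l • z = z := by rw [smul_smul, inv_mul_cancel₀ hl0.ne', one_smul]
    rw [hinv]
    have hnorm : (‖l • z‖₊ : ℝ≥0∞) = ENNReal.ofReal l * ‖z‖₊ := by
      rw [nnnorm_smul, ENNReal.coe_mul, ← enorm_eq_nnnorm l, Real.enorm_eq_ofReal hl0.le]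
    rw [hnorm]
    have ha3 : ENNReal.ofReal (l^3) = (ENNReal.ofReal l)^3 := ENNReal.ofReal_pow hl0.le 3
    have ha4 : ENNReal.ofReal (l^4) = (ENNReal.ofReal l)^4 := ENNReal.ofReal_pow hl0.le 4
    rw [ha3, ha4, div_eq_mul_inv]
    set a := ENNReal.ofReal l with hadef
    have ha0 : a ≠ 0 := (ENNReal.ofReal_pos.mpr hl0).ne'
    have hatop : a ≠ ⊤ := ENNReal.ofReal_ne_top
    have hone : a^3 * a * (a^4)⁻¹ = 1 := by
      rw [show a^3*a = a^4 by ring]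
      exact ENNReal.mul_inv_cancel (pow_ne_zero _ ha0) (ENNReal.pow_ne_top hatop)
    calc a^3 * ((DZG R (l•z) * (a * ‖z‖₊)) * ((‖f z‖₊ : ℝ≥0∞) * ((a^4)⁻¹)))
        = (a^3 * a * (a^4)⁻¹) * (DZG R (l•z) * (‖z‖₊ * (‖f z‖₊ : ℝ≥0∞))) := by ring
      _ = DZG R (l•z) * (‖z‖₊ * (‖f z‖₊ : ℝ≥0∞)) := by rw [hone, one_mul]
  -- swap 3
  have hint3 : AEMeasurable
      (fun p : ℝ × E3 => DZG R (p.1 • p.2) * (‖p.2‖₊ * (‖f p.2‖₊ : ℝ≥0∞)))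
      (((volume : Measure ℝ).restrict (Set.Ioo (0:ℝ) 1)).prod volume) :=
    ((DZG_meas R).comp (measurable_fst.smul measurable_snd)).aemeasurable.mul
      ((measurable_snd.enorm.aemeasurable).mul
        (hFmeas.comp_quasiMeasurePreserving qmp_snd))
  have swap3 := lintegral_lintegral_swap (f := fun l z => DZG R (l • z) * (‖z‖₊ * (‖f z‖₊ : ℝ≥0∞))) hint3
  -- step 5
  have step5 : (∫⁻ z, ∫⁻ l in Set.Ioo (0:ℝ) 1, DZG R (l • z) * (‖z‖₊ * (‖f z‖₊:ℝ≥0∞)))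
      ≤ (ENNReal.ofReal (2*R) * JBc + v) * ∫⁻ z, (‖f z‖₊ : ℝ≥0∞) := by
    rw [← lintegral_const_mul' _ _ hBne]
    refine lintegral_mono fun z => ?_
    have hm : Measurable (fun l : ℝ => DZG R (l • z)) :=
      (DZG_meas R).comp (measurable_id.smul_const z)
    rw [lintegral_mul_const'' _ hm.aemeasurable]
    calc (∫⁻ l in Set.Ioo (0:ℝ) 1, DZG R (l • z)) * (‖z‖₊ * (‖f z‖₊:ℝ≥0∞))
        = ((∫⁻ l in Set.Ioo (0:ℝ) 1, DZG R (l • z)) * ‖z‖₊) * (‖f z‖₊:ℝ≥0∞) := by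
          rw [mul_assoc]
      _ ≤ (ENNReal.ofReal (2*R) * JBc + v) * (‖f z‖₊:ℝ≥0∞) :=
          mul_le_mul_left (key_estimate hR z) _
  -- L¹ norm identification
  have hFint : (∫⁻ z, (‖f z‖₊ : ℝ≥0∞)) = ENNReal.ofReal (∫ x, ‖f x‖) := by
    rw [ofReal_integral_eq_lintegral_ofReal hf.norm
      (Filter.Eventually.of_forall fun x => norm_nonneg _)]
    simp_rw [ofReal_norm, enorm_eq_nnnorm]
  -- final numeric bound
  have hfin : (ENNReal.ofReal (2*R) * JBc + v) * ENNReal.ofReal (∫ x, ‖f x‖)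
      ≤ ENNReal.ofReal (C * (R^4+1) * ∫ x, ‖f x‖) := by
    have hRle : 2*R ≤ 2*(R^4+1) := by nlinarith [sq_nonneg (R^2-1), sq_nonneg (R-1), sq_nonneg R]
    have h1 : ENNReal.ofReal (2*R) * JBc ≤ ENNReal.ofReal (R^4+1) * (2 * JBc) := by
      calc ENNReal.ofReal (2*R) * JBc ≤ ENNReal.ofReal (2*(R^4+1)) * JBc :=
          mul_le_mul_left (ENNReal.ofReal_le_ofReal hRle) _
        _ = ENNReal.ofReal (R^4+1) * (2 * JBc) := by
          rw [ENNReal.ofReal_mul (by norm_num : (0:ℝ) ≤ 2),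
            show ENNReal.ofReal (2:ℝ) = 2 by norm_num]
          ring
    have h2 : v ≤ ENNReal.ofReal (R^4+1) * v := by
      conv_lhs => rw [← one_mul v]
      refine mul_le_mul_left ?_ v
      rw [show (1:ℝ≥0∞) = ENNReal.ofReal 1 from ENNReal.ofReal_one.symm]
      exact ENNReal.ofReal_le_ofReal (by nlinarith [pow_nonneg (le_of_lt hR) 4])
    have hne : (2*JBc + v) ≠ ⊤ := by
      refine ENNReal.add_ne_top.mpr ⟨ENNReal.mul_ne_top ?_ hct, hvt⟩
      norm_num
    have h3 : (2*JBc + v) ≤ ENNReal.ofReal C := by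
      calc (2*JBc + v) = ENNReal.ofReal ((2*JBc + v).toReal) :=
          (ENNReal.ofReal_toReal hne).symm
        _ ≤ ENNReal.ofReal C := ENNReal.ofReal_le_ofReal (by rw [hCdef]; linarith)
    calc (ENNReal.ofReal (2*R) * JBc + v) * ENNReal.ofReal (∫ x, ‖f x‖)
        ≤ (ENNReal.ofReal (R^4+1) * (2*JBc + v)) * ENNReal.ofReal (∫ x, ‖f x‖) := by
          refine mul_le_mul_left ?_ _
          calc ENNReal.ofReal (2*R) * JBc + v
              ≤ ENNReal.ofReal (R^4+1) * (2*JBc) + ENNReal.ofReal (R^4+1) * v :=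
                add_le_add h1 h2
            _ = ENNReal.ofReal (R^4+1) * (2*JBc + v) := by rw [mul_add]
      _ ≤ (ENNReal.ofReal (R^4+1) * ENNReal.ofReal C) * ENNReal.ofReal (∫ x, ‖f x‖) :=
          mul_le_mul_left (mul_le_mul_right h3 _) _
      _ = ENNReal.ofReal (C * (R^4+1) * ∫ x, ‖f x‖) := by
          rw [← ENNReal.ofReal_mul (by positivity : (0:ℝ) ≤ R^4+1),
            ← ENNReal.ofReal_mul (by positivity : (0:ℝ) ≤ (R^4+1) * C)]
          congr 1
          ring
  -- assemble
  calc (∫⁻ x in {x : E3 | ‖x‖ ≤ R}, ∫⁻ y,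
        ENNReal.ofReal ((1 + ‖x - y‖) ^ (-4 : ℝ)) * ‖DZfield3 f y‖₊)
      = ∫⁻ x in {x : E3 | ‖x‖ ≤ R}, ∫⁻ y, Kker x y * ‖DZfield3 f y‖₊ := rfl
    _ ≤ ∫⁻ x in {x : E3 | ‖x‖ ≤ R}, ∫⁻ y, Kker x y * (‖y‖₊ * DZN f y) := step1
    _ = ∫⁻ y, ∫⁻ x in {x : E3 | ‖x‖ ≤ R}, Kker x y * (‖y‖₊ * DZN f y) := swap1
    _ = ∫⁻ y, DZG R y * (‖y‖₊ * DZN f y) := step2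
    _ = ∫⁻ y, ∫⁻ l in Set.Ioo (0:ℝ) 1,
          (DZG R y * ‖y‖₊) * ((‖f (l⁻¹ • y)‖₊ : ℝ≥0∞) / ENNReal.ofReal (l^4)) := step3
    _ = ∫⁻ l in Set.Ioo (0:ℝ) 1, ∫⁻ y,
          (DZG R y * ‖y‖₊) * ((‖f (l⁻¹ • y)‖₊ : ℝ≥0∞) / ENNReal.ofReal (l^4)) := swap2
    _ = ∫⁻ l in Set.Ioo (0:ℝ) 1, ∫⁻ z, DZG R (l • z) * (‖z‖₊ * (‖f z‖₊ : ℝ≥0∞)) := step4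
    _ = ∫⁻ z, ∫⁻ l in Set.Ioo (0:ℝ) 1, DZG R (l • z) * (‖z‖₊ * (‖f z‖₊ : ℝ≥0∞)) := swap3
    _ ≤ (ENNReal.ofReal (2*R) * JBc + v) * ∫⁻ z, (‖f z‖₊ : ℝ≥0∞) := step5
    _ = (ENNReal.ofReal (2*R) * JBc + v) * ENNReal.ofReal (∫ x, ‖f x‖) := by rw [hFint]
    _ ≤ ENNReal.ofReal (C * (R^4+1) * ∫ x, ‖f x‖) := hfin
end
end
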